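/- arXiv:1411.7656 — 7 statements merged into one kernel-verified Lean document; each statement's English description precedes it below -/
import Mathlib

section
/- Let V ⊆ H be an n-dimensional subspace. For f ∈ H let Π_{H,V} f denote the H-orthogonal projection of f onto V, and let Π_{L²,V} f denote the unique element v ∈ V minimizing ‖ι f − ι v‖_{L²(μ)} (which exists and is unique since ι is injective and V is finite-dimensional). Then Π_{H,V} f = Π_{L²,V} f for every f ∈ H if and only if V is spanned by n eigenvectors of the positive self-adjoint operator ι* ∘ ι : H → H. -/
open MeasureTheory
open scoped InnerProductSpace

/-- For an `n`-dimensional subspace `V ⊆ H`, the `H`-orthogonal projection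
`Π_{H,V}` coincides with the `L²(μ)`-best-approximation projection `Π_{L²,V}` (the unique
minimizer of `‖ι f − ι v‖` over `v ∈ V`) for every `f ∈ H` if and only if `V` is spanned by
`n` eigenvectors of the positive self-adjoint operator `ι* ∘ ι : H → H`. -/
theorem stmt2 {H : Type*} [NormedAddCommGroup H] [InnerProductSpace ℝ H] [CompleteSpace H]
    {Ω : Type*} [MeasurableSpace Ω] (μ : Measure Ω) (k : Ω → H)
    (ι : H →L[ℝ] Lp ℝ 2 μ)
    (hι : ∀ f : H, (ι f : Ω → ℝ) =ᵐ[μ] fun x => ⟪f, k x⟫_ℝ)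
    (hinj : Function.Injective ι)
    (n : ℕ) (V : Submodule ℝ H) [FiniteDimensional ℝ V]
    (hV : Module.finrank ℝ V = n) :
    (∀ f : H, ∀ v ∈ V,
        ‖ι f - ι (V.orthogonalProjection f : H)‖ ≤ ‖ι f - ι v‖) ↔
      ∃ w : Fin n → H,
        (∀ i, w i ≠ 0 ∧ ∃ c : ℝ, ((ContinuousLinearMap.adjoint ι) ∘L ι) (w i) = c • w i) ∧
        Submodule.span ℝ (Set.range w) = V := by
  classical
  set T := (ContinuousLinearMap.adjoint ι) ∘L ι with hTdef
  have hTinner : ∀ a b : H, ⟪T a, b⟫_ℝ = ⟪ι a, ι b⟫_ℝ := by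
    intro a b
    simp [hTdef, ContinuousLinearMap.adjoint_inner_left]
  have hTsa : ∀ a b : H, ⟪T a, b⟫_ℝ = ⟪a, T b⟫_ℝ := by
    intro a b
    rw [hTinner, real_inner_comm, ← hTinner, real_inner_comm]
  -- the image submodule
  set K : Submodule ℝ (Lp ℝ 2 μ) := Submodule.map (ι : H →ₗ[ℝ] Lp ℝ 2 μ) V with hKdef
  -- Step 1: the minimization condition is equivalent to invariance of Vᗮ under T
  have step1 : (∀ f : H, ∀ v ∈ V,
      ‖ι f - ι (V.orthogonalProjection f : H)‖ ≤ ‖ι f - ι v‖) ↔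
      (∀ g ∈ Vᗮ, T g ∈ Vᗮ) := by
    have hPmem : ∀ f : H, (ι (V.orthogonalProjection f : H)) ∈ K := by
      intro f
      exact Submodule.mem_map_of_mem (V.orthogonalProjection f).2
    have hiff : ∀ f : H, (∀ v ∈ V,
        ‖ι f - ι (V.orthogonalProjection f : H)‖ ≤ ‖ι f - ι v‖) ↔
        (∀ v ∈ V, ⟪T (f - (V.orthogonalProjection f : H)), v⟫_ℝ = 0) := by
      intro f
      set v0 : Lp ℝ 2 μ := ι (V.orthogonalProjection f : H) with hv0
      have base : (‖ι f - v0‖ = ⨅ w : K, ‖ι f - (w : Lp ℝ 2 μ)‖) ↔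
          ∀ w ∈ K, ⟪ι f - v0, w⟫_ℝ = 0 :=
        Submodule.norm_eq_iInf_iff_real_inner_eq_zero K (hPmem f)
      constructor
      · intro hmin v hv
        have hle : ∀ w : K, ‖ι f - v0‖ ≤ ‖ι f - (w : Lp ℝ 2 μ)‖ := by
          rintro ⟨w, x, hx, rfl⟩
          exact hmin x hx
        have heq : ‖ι f - v0‖ = ⨅ w : K, ‖ι f - (w : Lp ℝ 2 μ)‖ := by
          refine le_antisymm (le_ciInf hle) ?_
          exact ciInf_le ⟨0, by rintro r ⟨w, rfl⟩; positivity⟩ (⟨v0, hPmem f⟩ : K)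
        have h0 := base.mp heq (ι v) (Submodule.mem_map_of_mem hv)
        rw [← map_sub] at h0
        rw [← hTinner] at h0
        simpa using h0
      · intro horth v hv
        have horth' : ∀ w ∈ K, ⟪ι f - v0, w⟫_ℝ = 0 := by
          rintro w ⟨x, hx, rfl⟩
          have := horth x hx
          rw [hTinner] at this
          rw [map_sub] at this
          simpa [hv0] using this
        have heq := base.mpr horth'
        rw [heq]
        exact ciInf_le ⟨0, by rintro r ⟨w, rfl⟩; positivity⟩
          (⟨ι v, Submodule.mem_map_of_mem hv⟩ : K)
    constructor
    · intro hmin g hg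
      rw [Submodule.mem_orthogonal']
      intro v hv
      have := (hiff g).mp (hmin g) v hv
      rwa [Submodule.orthogonalProjectionOnto_apply_of_mem_orthogonal hg,
        Submodule.coe_zero, sub_zero] at this
    · intro hinv f
      refine (hiff f).mpr ?_
      intro v hv
      have hmem : T (f - (V.orthogonalProjection f : H)) ∈ Vᗮ :=
        hinv _ (Submodule.sub_starProjection_mem_orthogonal f)
      exact (Submodule.mem_orthogonal' V _).mp hmem v hv
  -- Step 2: invariance of Vᗮ is equivalent to invariance of V
  have step2 : (∀ g ∈ Vᗮ, T g ∈ Vᗮ) ↔ (∀ v ∈ V, T v ∈ V) := by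
    constructor
    · intro h v hv
      rw [← Submodule.orthogonal_orthogonal V, Submodule.mem_orthogonal']
      intro g hg
      rw [hTsa, real_inner_comm]
      exact (Submodule.mem_orthogonal' _ _).mp (h g hg) v hv
    · intro h g hg
      rw [Submodule.mem_orthogonal']
      intro v hv
      rw [hTsa]
      exact (Submodule.mem_orthogonal' V g).mp hg (T v) (h v hv)
  rw [step1, step2]
  -- Step 3: invariance of V is equivalent to V being spanned by eigenvectors
  constructor
  · intro hinv
    set S : V →ₗ[ℝ] V := (T : H →ₗ[ℝ] H).restrict hinv with hSdef
    have hScoe : ∀ x : V, ((S x : H)) = T (x : H) := by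
      intro x; simp [hSdef, LinearMap.restrict_coe_apply]
    have hSsym : S.IsSymmetric := by
      intro x y
      rw [Submodule.coe_inner, Submodule.coe_inner, hScoe, hScoe]
      exact hTsa _ _
    set b := hSsym.eigenvectorBasis hV with hbdef
    refine ⟨fun i => (b i : H), fun i => ?_, ?_⟩
    · constructor
      · simpa [Submodule.coe_eq_zero] using b.orthonormal.ne_zero i
      · refine ⟨hSsym.eigenvalues hV i, ?_⟩
        have := hSsym.apply_eigenvectorBasis hV i
        have hcoe := congrArg (Submodule.subtype V) this
        simpa [hScoe, ← hbdef] using hcoe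
    · have hspan : Submodule.span ℝ (Set.range b) = (⊤ : Submodule ℝ V) :=
        b.toBasis.span_eq ▸ by simp
      have : Submodule.map V.subtype (Submodule.span ℝ (Set.range b)) = V := by
        rw [hspan, Submodule.map_top, Submodule.range_subtype]
      rw [Submodule.map_span] at this
      have hr : (Set.range fun i => ((b i : H))) = ⇑V.subtype '' Set.range ⇑b := by
        ext x
        simp [Set.range_comp]
      rw [hr]
      exact this
  · rintro ⟨w, hw, hspan⟩ v hv
    rw [← hspan] at hv
    induction hv using Submodule.span_induction with
    | mem x hx =>
      obtain ⟨i, rfl⟩ := hx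
      obtain ⟨c, hc⟩ := (hw i).2
      rw [hc]
      exact Submodule.smul_mem V c (hspan ▸ Submodule.subset_span ⟨i, rfl⟩)
    | zero => simp
    | add x y _ _ hx hy => rw [map_add]; exact Submodule.add_mem V hx hy
    | smul c x _ hx => rw [_root_.map_smul]; exact Submodule.smul_mem V c hx
end

section
/- Assume every point evaluation f ↦ f(x) (x ∈ Ω) is a bounded linear functional on H. Let (v_k)_{k∈ℕ} be a Hilbert orthonormal basis of H, let V_n := span(v_1,…,v_n), and let Π_{V_n} denote the H-orthogonal projection onto V_n. Then for every x ∈ Ω: sup over f ∈ H with ‖f‖_H ≤ 1 of |f(x) − (Π_{V_n} f)(x)| equals (Σ_{k>n} v_k(x)²)^{1/2}. -/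
open MeasureTheory
open scoped InnerProductSpace

set_option maxHeartbeats 1000000

/-- Assume every point evaluation on `H` is bounded. Let `(v_k)` be a
Hilbert orthonormal basis of `H`, `V_n = span(v_0, …, v_{n-1})`, and `Π_{V_n}` the
`H`-orthogonal projection onto `V_n` (given explicitly by `f ↦ Σ_{k<n} ⟪f, v_k⟫ v_k`).
Then for every `x ∈ Ω`, the supremum over the unit ball of `|f(x) − (Π_{V_n} f)(x)|`
equals `(Σ_{k ≥ n} v_k(x)²)^{1/2}`. -/
theorem stmt4 {H : Type*} [NormedAddCommGroup H] [InnerProductSpace ℝ H] [CompleteSpace H]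
    {Ω : Type*}
    (ev : H →ₗ[ℝ] (Ω → ℝ)) (hev : Function.Injective ev)
    (hbdd : ∀ x : Ω, ∃ C : ℝ, ∀ f : H, |ev f x| ≤ C * ‖f‖)
    (v : ℕ → H) (hv : Orthonormal ℝ v)
    (hdense : (Submodule.span ℝ (Set.range v)).topologicalClosure = ⊤)
    (n : ℕ) (x : Ω) :
    sSup {c : ℝ | ∃ f : H, ‖f‖ ≤ 1 ∧
        c = |ev f x - ev (∑ k ∈ Finset.range n, ⟪f, v k⟫_ℝ • v k) x|}
      = Real.sqrt (∑' k : ℕ, (ev (v (n + k)) x) ^ 2) := by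
  obtain ⟨C, hC⟩ := hbdd x
  set L : H →ₗ[ℝ] ℝ := (LinearMap.proj x).comp ev with hL
  have hLf : ∀ f : H, L f = ev f x := fun f => rfl
  set φ : H →L[ℝ] ℝ := L.mkContinuousOfExistsBound ⟨C, fun f => by
    simpa [Real.norm_eq_abs, hLf] using hC f⟩ with hφ
  set g : H := (InnerProductSpace.toDual ℝ H).symm φ with hg
  have hgf : ∀ f : H, ⟪g, f⟫_ℝ = ev f x := fun f => by
    simp [hg, InnerProductSpace.toDual_symm_apply, hφ]
    rfl
  set h : H := g - ∑ k ∈ Finset.range n, ⟪g, v k⟫_ℝ • v k with hh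
  have key : ∀ f : H,
      ev f x - ev (∑ k ∈ Finset.range n, ⟪f, v k⟫_ℝ • v k) x = ⟪f, h⟫_ℝ := by
    intro f
    rw [← hgf f, ← hgf _]
    simp [hh, inner_sub_right, inner_sum, real_inner_smul_right, real_inner_comm g f,
      mul_comm]
  have hsup : IsGreatest {c : ℝ | ∃ f : H, ‖f‖ ≤ 1 ∧
      c = |ev f x - ev (∑ k ∈ Finset.range n, ⟪f, v k⟫_ℝ • v k) x|} ‖h‖ := by
    constructor
    · rcases eq_or_ne h 0 with h0 | h0
      · exact ⟨0, by simp, by simp [key, h0]⟩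
      · refine ⟨‖h‖⁻¹ • h, ?_, ?_⟩
        · simp [norm_smul, abs_of_nonneg, inv_mul_cancel₀ (norm_ne_zero_iff.2 h0)]
        · rw [key, real_inner_smul_left, real_inner_self_eq_norm_sq]
          rw [abs_of_nonneg (by positivity)]
          field_simp [norm_ne_zero_iff.2 h0]
    · rintro c ⟨f, hf1, rfl⟩
      rw [key]
      calc |⟪f, h⟫_ℝ| ≤ ‖f‖ * ‖h‖ := abs_real_inner_le_norm f h
        _ ≤ 1 * ‖h‖ := by gcongr
        _ = ‖h‖ := one_mul _
  rw [hsup.csSup_eq]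
  -- now compute ‖h‖
  set b : HilbertBasis ℕ ℝ H := HilbertBasis.mk hv (by rw [hdense]) with hb
  have hbv : ∀ i, b i = v i := fun i => by rw [hb, HilbertBasis.coe_mk]
  have horth : ∀ k j, ⟪v k, v j⟫_ℝ = if k = j then 1 else 0 := orthonormal_iff_ite.mp hv
  have hinner : ∀ i, ⟪h, v i⟫_ℝ = if i < n then 0 else ⟪g, v i⟫_ℝ := by
    intro i
    simp only [hh, inner_sub_left, sum_inner, real_inner_smul_left, horth, mul_ite,
      mul_one, mul_zero]
    rw [Finset.sum_ite_eq' (Finset.range n) i fun k => ⟪g, v k⟫_ℝ]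
    simp only [Finset.mem_range]
    split_ifs <;> ring
  have hsummable : Summable fun i => ⟪h, v i⟫_ℝ * ⟪v i, h⟫_ℝ := by
    have := b.summable_inner_mul_inner h h
    simp only [hbv] at this
    exact this
  have hq : Summable fun i => ⟪h, v i⟫_ℝ ^ 2 := by
    simpa [sq, real_inner_comm] using hsummable
  have hnorm : ‖h‖ ^ 2 = ∑' i, ⟪h, v i⟫_ℝ ^ 2 := by
    have := b.tsum_inner_mul_inner h h
    simp only [hbv] at this
    rw [← real_inner_self_eq_norm_sq, ← this]
    congr 1
    ext i
    rw [sq, real_inner_comm (v i) h]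
  have hshift : ∑ i ∈ Finset.range n, ⟪h, v i⟫_ℝ ^ 2
      + ∑' k, ⟪h, v (k + n)⟫_ℝ ^ 2 = ∑' i, ⟪h, v i⟫_ℝ ^ 2 :=
    Summable.sum_add_tsum_nat_add n hq
  have hzero : ∑ i ∈ Finset.range n, ⟪h, v i⟫_ℝ ^ 2 = 0 := by
    apply Finset.sum_eq_zero
    intro i hi
    rw [hinner i, if_pos (Finset.mem_range.mp hi)]
    ring
  have htail : ∑' k : ℕ, (ev (v (n + k)) x) ^ 2 = ‖h‖ ^ 2 := by
    rw [hnorm, ← hshift, hzero, zero_add]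
    congr 1
    ext k
    rw [hinner (k + n), if_neg (by omega), hgf (v (k + n)), add_comm k n]
  rw [htail, Real.sqrt_sq (norm_nonneg h)]
end

section
/- Assume Σ_j λ_j < ∞. Define p_n as the infimum, over all n-dimensional subspaces V ⊆ H, of (∫_Ω P_V(x)² dμ(x))^{1/2}. Then p_n = (Σ_{j>n} λ_j)^{1/2}; the infimum is attained by E_n := span(e_1,…,e_n), and if moreover λ_n > λ_{n+1} then E_n is the unique n-dimensional subspace attaining it. -/
open MeasureTheory
open scoped InnerProductSpace

set_option linter.unusedSectionVars false

section Aux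

variable {H : Type*} [NormedAddCommGroup H] [InnerProductSpace ℝ H] [CompleteSpace H]

lemma proj_selfAdj {V : Submodule ℝ H} {p : H →ₗ[ℝ] H}
    (hp : ∀ f : H, p f ∈ V ∧ f - p f ∈ Vᗮ) (u w : H) :
    ⟪p u, w⟫_ℝ = ⟪u, p w⟫_ℝ := by
  have h1 : ⟪p u, w - p w⟫_ℝ = 0 :=
    Submodule.inner_right_of_mem_orthogonal (hp u).1 (hp w).2
  have h2 : ⟪u - p u, p w⟫_ℝ = 0 :=
    Submodule.inner_left_of_mem_orthogonal (hp w).1 (hp u).2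
  rw [inner_sub_right] at h1
  rw [inner_sub_left] at h2
  linarith

lemma proj_fix {V : Submodule ℝ H} {p : H →ₗ[ℝ] H}
    (hp : ∀ f : H, p f ∈ V ∧ f - p f ∈ Vᗮ) {v : H} (hv : v ∈ V) : p v = v := by
  have h0 : v - p v ∈ V := Submodule.sub_mem V hv (hp v).1
  have h1 : ⟪v - p v, v - p v⟫_ℝ = 0 :=
    Submodule.inner_left_of_mem_orthogonal h0 (hp v).2
  rw [inner_self_eq_zero, sub_eq_zero] at h1
  exact h1.symm

lemma proj_pyth {V : Submodule ℝ H} {p : H →ₗ[ℝ] H}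
    (hp : ∀ f : H, p f ∈ V ∧ f - p f ∈ Vᗮ) (f : H) :
    ‖f‖ ^ 2 = ‖p f‖ ^ 2 + ‖f - p f‖ ^ 2 := by
  have h1 : ⟪p f, f - p f⟫_ℝ = 0 :=
    Submodule.inner_right_of_mem_orthogonal (hp f).1 (hp f).2
  have := norm_add_sq_real (p f) (f - p f)
  rw [h1, add_sub_cancel] at this
  linarith

lemma parseval {e : ℕ → H} (he : Orthonormal ℝ e)
    (hdense : (Submodule.span ℝ (Set.range e)).topologicalClosure = ⊤) (f : H) :
    HasSum (fun i => ⟪e i, f⟫_ℝ ^ 2) (‖f‖ ^ 2) := by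
  let b : HilbertBasis ℕ ℝ H := HilbertBasis.mk he (le_of_eq hdense.symm)
  have hb : ⇑b = e := HilbertBasis.coe_mk he _
  have h := b.hasSum_inner_mul_inner f f
  rw [real_inner_self_eq_norm_sq, hb] at h
  have hfun : (fun i => ⟪e i, f⟫_ℝ ^ 2) = fun i => ⟪f, e i⟫_ℝ * ⟪e i, f⟫_ℝ := by
    funext i; rw [real_inner_comm (e i) f]; ring
  rw [hfun]; exact h

end Aux
section Aux2

variable {H : Type*} [NormedAddCommGroup H] [InnerProductSpace ℝ H] [CompleteSpace H]
  {Ω : Type*} [MeasurableSpace Ω] {μ : Measure Ω}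


lemma hasSum_norm_iota (ι : H →L[ℝ] Lp ℝ 2 μ) {e : ℕ → H} {lam : ℕ → ℝ}
    (he : Orthonormal ℝ e)
    (hdense : (Submodule.span ℝ (Set.range e)).topologicalClosure = ⊤)
    (heig : ∀ i j, ⟪ι (e i), ι (e j)⟫_ℝ = if i = j then lam j else 0) (f : H) :
    HasSum (fun i => lam i * ⟪e i, f⟫_ℝ ^ 2) (‖ι f‖ ^ 2) := by
  let b : HilbertBasis ℕ ℝ H := HilbertBasis.mk he (le_of_eq hdense.symm)
  have hb : ⇑b = e := HilbertBasis.coe_mk he _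
  have hs1 : HasSum (fun i => ⟪e i, f⟫_ℝ • ι (e i)) (ι f) := by
    have h := (b.hasSum_repr f).mapL ι
    have hfe : (fun i => ι (b.repr f i • b i)) = fun i => ⟪e i, f⟫_ℝ • ι (e i) := by
      funext i
      rw [_root_.map_smul, b.repr_apply_apply, hb]
    exact hfe ▸ h
  have hinner : ∀ j, ⟪ι f, ι (e j)⟫_ℝ = ⟪e j, f⟫_ℝ * lam j := by
    intro j
    have h := hs1.mapL (innerSL ℝ (ι (e j)))
    have hfun : (fun i => (innerSL ℝ (ι (e j))) (⟪e i, f⟫_ℝ • ι (e i)))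
        = fun i => if i = j then ⟪e j, f⟫_ℝ * lam j else 0 := by
      funext i
      simp only [innerSL_apply_apply, real_inner_smul_right, heig]
      by_cases hij : i = j
      · subst hij; simp
      · simp [hij, Ne.symm hij]
    rw [hfun] at h
    have h4 := h.unique (hasSum_ite_eq j _)
    rw [innerSL_apply_apply] at h4
    exact (real_inner_comm _ _).trans h4
  have h3 := hs1.mapL (innerSL ℝ (ι f))
  have hfun : (fun i => (innerSL ℝ (ι f)) (⟪e i, f⟫_ℝ • ι (e i)))
      = fun i => lam i * ⟪e i, f⟫_ℝ ^ 2 := by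
    funext i
    rw [innerSL_apply_apply, real_inner_smul_right, hinner i]
    ring
  rw [hfun, innerSL_apply_apply, real_inner_self_eq_norm_sq] at h3
  exact h3

lemma trace_hasSum {e : ℕ → H} (he : Orthonormal ℝ e)
    (hdense : (Submodule.span ℝ (Set.range e)).topologicalClosure = ⊤)
    {V : Submodule ℝ H} {p : H →ₗ[ℝ] H} [FiniteDimensional ℝ V]
    (hp : ∀ f : H, p f ∈ V ∧ f - p f ∈ Vᗮ) :
    HasSum (fun i => ‖p (e i)‖ ^ 2) ((Module.finrank ℝ V : ℝ)) := by
  have hfix : ∀ v : H, v ∈ V → p v = v := fun v hv => proj_fix hp hv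
  let b := stdOrthonormalBasis ℝ V
  have hbn : ∀ k, ‖(b k : H)‖ = 1 := fun k => by
    rw [Submodule.norm_coe]; exact b.orthonormal.1 k
  have hform : ∀ i, ‖p (e i)‖ ^ 2 = ∑ k, ⟪e i, (b k : H)⟫_ℝ ^ 2 := by
    intro i
    set u : V := ⟨p (e i), (hp (e i)).1⟩ with hu
    have hcoe : (u : H) = p (e i) := rfl
    have hk : ∀ k, ⟪b k, u⟫_ℝ = ⟪e i, (b k : H)⟫_ℝ := by
      intro k
      rw [Submodule.coe_inner, hcoe, ← proj_selfAdj hp ((b k : H)) (e i),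
        hfix _ (SetLike.coe_mem (b k)), real_inner_comm]
    have hsum := b.sum_inner_mul_inner u u
    have hnorm : ⟪u, u⟫_ℝ = ‖p (e i)‖ ^ 2 := by
      rw [real_inner_self_eq_norm_sq, ← hcoe, Submodule.norm_coe]
    rw [← hnorm, ← hsum]
    refine Finset.sum_congr rfl fun k _ => ?_
    rw [hk k, show ⟪u, b k⟫_ℝ = ⟪e i, (b k : H)⟫_ℝ from (real_inner_comm _ _).trans (hk k)]
    ring
  have hterm : ∀ k : Fin (Module.finrank ℝ V), HasSum (fun i => ⟪e i, (b k : H)⟫_ℝ ^ 2) 1 := by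
    intro k
    have := parseval he hdense ((b k : H))
    rwa [hbn k, one_pow] at this
  have h := hasSum_sum (f := fun k i => ⟪e i, (b k : H)⟫_ℝ ^ 2)
    (s := Finset.univ) (fun k _ => hterm k)
  simp only [Finset.sum_const, Finset.card_univ, Fintype.card_fin, nsmul_eq_mul, mul_one] at h
  have hfun : (fun i => ∑ k, ⟪e i, (b k : H)⟫_ℝ ^ 2) = fun i => ‖p (e i)‖ ^ 2 :=
    funext fun i => (hform i).symm
  rwa [hfun] at h


lemma integral_power {μ : Measure Ω} (k : Ω → H) (ι : H →L[ℝ] Lp ℝ 2 μ)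
    (hι : ∀ f : H, (ι f : Ω → ℝ) =ᵐ[μ] fun x => ⟪f, k x⟫_ℝ)
    {e : ℕ → H} {lam : ℕ → ℝ}
    (he : Orthonormal ℝ e)
    (hdense : (Submodule.span ℝ (Set.range e)).topologicalClosure = ⊤)
    (hpos : ∀ j, 0 < lam j) (hsum : Summable lam)
    (heig : ∀ i j, ⟪ι (e i), ι (e j)⟫_ℝ = if i = j then lam j else 0)
    {V : Submodule ℝ H} {p : H →ₗ[ℝ] H}
    (hp : ∀ f : H, p f ∈ V ∧ f - p f ∈ Vᗮ) :
    ∫ x, ‖k x - p (k x)‖ ^ 2 ∂μ = ∑' i, lam i * ‖e i - p (e i)‖ ^ 2 := by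
  set t : ℕ → ℝ := fun i => ‖e i - p (e i)‖ ^ 2 with htdef
  set g : ℕ → Lp ℝ 2 μ := fun i => ι (e i - p (e i)) with hgdef
  have ht0 : ∀ i, 0 ≤ t i := fun i => sq_nonneg _
  have ht1 : ∀ i, t i ≤ 1 := fun i => by
    show ‖e i - p (e i)‖ ^ 2 ≤ 1
    have h := proj_pyth hp (e i)
    rw [he.1 i] at h
    nlinarith [sq_nonneg ‖p (e i)‖]
  have hSsummable : Summable fun i => lam i * t i := by
    refine Summable.of_nonneg_of_le (fun i => mul_nonneg (hpos i).le (ht0 i))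
      (fun i => ?_) hsum
    calc lam i * t i ≤ lam i * 1 := mul_le_mul_of_nonneg_left (ht1 i) (hpos i).le
      _ = lam i := mul_one _
  set S : ℝ := ∑' i, lam i * t i with hSdef
  have hS0 : 0 ≤ S := tsum_nonneg fun i => mul_nonneg (hpos i).le (ht0 i)
  have hg : ∀ i, HasSum (fun j => lam j * ⟪e j, e i - p (e i)⟫_ℝ ^ 2) (‖g i‖ ^ 2) :=
    fun i => hasSum_norm_iota ι he hdense heig _
  have hadj : ∀ j i, ⟪e j, e i - p (e i)⟫_ℝ = ⟪e i, e j - p (e j)⟫_ℝ := by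
    intro j i
    rw [inner_sub_right, inner_sub_right]
    have h1 := proj_selfAdj hp (e j) (e i)
    have c1 := real_inner_comm (e j) (e i)
    have c2 := real_inner_comm (p (e j)) (e i)
    linarith
  have hcol : ∀ j, HasSum (fun i => lam j * ⟪e j, e i - p (e i)⟫_ℝ ^ 2) (lam j * t j) := by
    intro j
    have h := (parseval he hdense (e j - p (e j))).mul_left (lam j)
    have hfe : (fun i => lam j * ⟪e i, e j - p (e j)⟫_ℝ ^ 2)
        = fun i => lam j * ⟪e j, e i - p (e i)⟫_ℝ ^ 2 := by
      funext i; rw [hadj j i]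
    rwa [hfe] at h
  -- double sum in ENNReal
  set A : ℕ → ℕ → ENNReal := fun i j => ENNReal.ofReal (lam j * ⟪e j, e i - p (e i)⟫_ℝ ^ 2)
    with hAdef
  have hAnn : ∀ i j, 0 ≤ lam j * ⟪e j, e i - p (e i)⟫_ℝ ^ 2 :=
    fun i j => mul_nonneg (hpos j).le (sq_nonneg _)
  have hrow : ∀ i, (∑' j, A i j) = ENNReal.ofReal (‖g i‖ ^ 2) := fun i => by
    rw [hAdef, ← ENNReal.ofReal_tsum_of_nonneg (hAnn i) (hg i).summable, (hg i).tsum_eq]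
  have hcolE : ∀ j, (∑' i, A i j) = ENNReal.ofReal (lam j * t j) := fun j => by
    rw [hAdef, ← ENNReal.ofReal_tsum_of_nonneg (fun i => hAnn i j) (hcol j).summable,
      (hcol j).tsum_eq]
  have hswap : (∑' i, ENNReal.ofReal (‖g i‖ ^ 2)) = ENNReal.ofReal S := by
    calc (∑' i, ENNReal.ofReal (‖g i‖ ^ 2)) = ∑' i, ∑' j, A i j :=
        (tsum_congr hrow).symm
      _ = ∑' j, ∑' i, A i j := ENNReal.tsum_comm
      _ = ∑' j, ENNReal.ofReal (lam j * t j) := tsum_congr hcolE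
      _ = ENNReal.ofReal S := by
          rw [hSdef, ENNReal.ofReal_tsum_of_nonneg
            (fun j => mul_nonneg (hpos j).le (ht0 j)) hSsummable]
  have hfin : (∑' i, ENNReal.ofReal (‖g i‖ ^ 2)) ≠ ⊤ := by
    rw [hswap]; exact ENNReal.ofReal_ne_top
  have hsummg : Summable fun i => ‖g i‖ ^ 2 := by
    have h := ENNReal.summable_toReal hfin
    refine h.congr fun i => ?_
    rw [ENNReal.toReal_ofReal (sq_nonneg _)]
  have hgsum : (∑' i, ‖g i‖ ^ 2) = S := by
    have h : ENNReal.ofReal (∑' i, ‖g i‖ ^ 2) = ENNReal.ofReal S := by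
      rw [ENNReal.ofReal_tsum_of_nonneg (fun i => sq_nonneg _) hsummg]
      exact hswap
    exact (ENNReal.ofReal_eq_ofReal_iff (tsum_nonneg fun i => sq_nonneg _) hS0).mp h
  -- integrals of the squares
  have hInt : ∀ i, Integrable (fun x => ((g i : Ω → ℝ) x) ^ 2) μ := fun i => by
    have h := MeasureTheory.L2.integrable_inner (𝕜 := ℝ) (g i) (g i)
    refine h.congr (Filter.Eventually.of_forall fun x => ?_)
    simp [RCLike.inner_apply, pow_two]
  have hIval : ∀ i, (∫ x, ((g i : Ω → ℝ) x) ^ 2 ∂μ) = ‖g i‖ ^ 2 := fun i => by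
    have h := MeasureTheory.L2.inner_def (𝕜 := ℝ) (g i) (g i)
    rw [real_inner_self_eq_norm_sq] at h
    rw [h]
    refine integral_congr_ae (Filter.Eventually.of_forall fun x => ?_)
    simp [RCLike.inner_apply, pow_two]
  have hlint : ∀ i, (∫⁻ x, ‖((g i : Ω → ℝ) x) ^ 2‖ₑ ∂μ) = ENNReal.ofReal (‖g i‖ ^ 2) := by
    intro i
    calc (∫⁻ x, ‖((g i : Ω → ℝ) x) ^ 2‖ₑ ∂μ)
        = ∫⁻ x, ENNReal.ofReal (((g i : Ω → ℝ) x) ^ 2) ∂μ :=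
          lintegral_congr fun x => Real.enorm_eq_ofReal (sq_nonneg _)
      _ = ENNReal.ofReal (∫ x, ((g i : Ω → ℝ) x) ^ 2 ∂μ) :=
          (ofReal_integral_eq_lintegral_ofReal (hInt i)
            (Filter.Eventually.of_forall fun x => sq_nonneg _)).symm
      _ = ENNReal.ofReal (‖g i‖ ^ 2) := by rw [hIval i]
  -- pointwise identity
  have haeg : ∀ᵐ x ∂μ, ∀ i, (g i : Ω → ℝ) x = ⟪e i - p (e i), k x⟫_ℝ :=
    ae_all_iff.mpr fun i => hι _
  have hptw : ∀ᵐ x ∂μ, ‖k x - p (k x)‖ ^ 2 = ∑' i, ((g i : Ω → ℝ) x) ^ 2 := by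
    filter_upwards [haeg] with x hx
    have hP := parseval he hdense (k x - p (k x))
    have hfe : (fun i => ⟪e i, k x - p (k x)⟫_ℝ ^ 2) = fun i => ((g i : Ω → ℝ) x) ^ 2 := by
      funext i
      rw [hx i]
      congr 1
      rw [inner_sub_right, inner_sub_left]
      have h1 := proj_selfAdj hp (e i) (k x)
      linarith
    rw [hfe] at hP
    exact hP.tsum_eq.symm
  have hmeas : ∀ i, AEStronglyMeasurable (fun x => ((g i : Ω → ℝ) x) ^ 2) μ := fun i => by
    have h := Lp.aestronglyMeasurable (g i)
    exact (h.mul h).congr (Filter.Eventually.of_forall fun x => (pow_two _).symm)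
  calc ∫ x, ‖k x - p (k x)‖ ^ 2 ∂μ
      = ∫ x, ∑' i, ((g i : Ω → ℝ) x) ^ 2 ∂μ := integral_congr_ae hptw
    _ = ∑' i, ∫ x, ((g i : Ω → ℝ) x) ^ 2 ∂μ := by
        refine integral_tsum hmeas ?_
        rw [tsum_congr hlint]
        exact hfin
    _ = ∑' i, ‖g i‖ ^ 2 := tsum_congr hIval
    _ = S := hgsum

end Aux2


lemma opt_lemma {lam : ℕ → ℝ} (hpos : ∀ j, 0 < lam j) (hmono : ∀ j, lam (j + 1) ≤ lam j)
    (hsum : Summable lam) {t : ℕ → ℝ} (ht0 : ∀ i, 0 ≤ t i) (ht1 : ∀ i, t i ≤ 1)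
    {n : ℕ} (htr : HasSum (fun i => 1 - t i) (n : ℝ)) :
    (∑' j, lam (j + n)) ≤ ∑' i, lam i * t i ∧
      ((∀ m, m + 1 = n → lam n < lam m) →
        (∑' i, lam i * t i) = ∑' j, lam (j + n) → ∀ i < n, t i = 0) := by
  have hant : Antitone lam := antitone_nat_of_succ_le hmono
  set s : ℝ := ∑ i ∈ Finset.range n, t i with hs
  have hs0 : 0 ≤ s := Finset.sum_nonneg fun i _ => ht0 i
  -- summabilities
  have hsummt : Summable fun i => lam i * t i := by
    refine Summable.of_nonneg_of_le (fun i => mul_nonneg (hpos i).le (ht0 i))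
      (fun i => ?_) hsum
    calc lam i * t i ≤ lam i * 1 := by
          exact mul_le_mul_of_nonneg_left (ht1 i) (hpos i).le
      _ = lam i := mul_one _
  have hsumtail : Summable fun j => lam (j + n) := (summable_nat_add_iff n).mpr hsum
  have hsumtail_t : Summable fun j => lam (j + n) * t (j + n) :=
    (summable_nat_add_iff n).mpr hsummt
  have hsumtail_q : Summable fun j => lam (j + n) * (1 - t (j + n)) := by
    refine Summable.of_nonneg_of_le
      (fun j => mul_nonneg (hpos _).le (by linarith [ht1 (j + n)]))
      (fun j => ?_) hsumtail
    calc lam (j + n) * (1 - t (j + n)) ≤ lam (j + n) * 1 := by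
          exact mul_le_mul_of_nonneg_left (by linarith [ht0 (j + n)]) (hpos _).le
      _ = lam (j + n) := mul_one _
  -- tail of the trace sum
  have htail : HasSum (fun j => 1 - t (j + n)) s := by
    have h := (hasSum_nat_add_iff' (f := fun i => 1 - t i) n).mpr htr
    have hv : (n : ℝ) - ∑ i ∈ Finset.range n, (1 - t i) = s := by
      rw [Finset.sum_sub_distrib, Finset.sum_const, Finset.card_range]
      simp [hs]
    rwa [hv] at h
  -- split the objective
  have hsplit : (∑ i ∈ Finset.range n, lam i * t i) + ∑' j, lam (j + n) * t (j + n)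
      = ∑' i, lam i * t i := Summable.sum_add_tsum_nat_add n hsummt
  -- tail sum identity
  have htailsplit : (∑' j, lam (j + n)) =
      (∑' j, lam (j + n) * t (j + n)) + ∑' j, lam (j + n) * (1 - t (j + n)) := by
    rw [← Summable.tsum_add hsumtail_t hsumtail_q]
    exact tsum_congr fun j => by ring
  -- key1 : tail_q ≤ lam n * s
  have key1 : (∑' j, lam (j + n) * (1 - t (j + n))) ≤ lam n * s := by
    have hle : ∀ j, lam (j + n) * (1 - t (j + n)) ≤ lam n * (1 - t (j + n)) := fun j =>
      mul_le_mul_of_nonneg_right (hant (Nat.le_add_left n j)) (by linarith [ht1 (j + n)])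
    have h2 : HasSum (fun j => lam n * (1 - t (j + n))) (lam n * s) := htail.mul_left _
    exact Summable.tsum_le_tsum hle hsumtail_q h2.summable |>.trans (le_of_eq h2.tsum_eq)
  -- key2 : lam n * s ≤ head sum
  have key2 : lam n * s ≤ ∑ i ∈ Finset.range n, lam i * t i := by
    rw [Finset.mul_sum]
    refine Finset.sum_le_sum fun i hi => ?_
    exact mul_le_mul_of_nonneg_right (hant (Finset.mem_range.mp hi).le) (ht0 i)
  constructor
  · calc (∑' j, lam (j + n)) =
        (∑' j, lam (j + n) * t (j + n)) + ∑' j, lam (j + n) * (1 - t (j + n)) := htailsplit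
      _ ≤ (∑' j, lam (j + n) * t (j + n)) + lam n * s := by linarith
      _ ≤ (∑' j, lam (j + n) * t (j + n)) + ∑ i ∈ Finset.range n, lam i * t i := by linarith
      _ = ∑' i, lam i * t i := by rw [← hsplit]; ring
  · intro hgap heq i hi
    obtain ⟨m, rfl⟩ : ∃ m, n = m + 1 :=
      ⟨n - 1, by omega⟩
    have hlt := hgap m rfl
    -- head sum = tail_q
    have hhead : (∑ i ∈ Finset.range (m + 1), lam i * t i)
        = ∑' j, lam (j + (m + 1)) * (1 - t (j + (m + 1))) := by
      have := heq
      rw [← hsplit, htailsplit] at this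
      linarith
    -- lower bound for head sum
    have hlow : lam m * s ≤ ∑ i ∈ Finset.range (m + 1), lam i * t i := by
      rw [Finset.mul_sum]
      refine Finset.sum_le_sum fun i hi' => ?_
      exact mul_le_mul_of_nonneg_right (hant (Nat.lt_succ_iff.mp (Finset.mem_range.mp hi')))
        (ht0 i)
    have hsz : s = 0 := by nlinarith [key1, hhead, hlow]
    have := (Finset.sum_eq_zero_iff_of_nonneg fun i _ => ht0 i).mp (by rw [← hs]; exact hsz)
    exact this i (Finset.mem_range.mpr hi)


/-- Assume `Σ_j λ_j < ∞`. With the Mercer eigenbasis `(e_j)` (zero-indexed),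
`p_n := inf_{dim V = n} (∫_Ω P_V(x)² dμ)^{1/2}` (where `P_V(x) = ‖k x − P_V (k x)‖` is the
Power Function) equals `(Σ_{j>n} λ_j)^{1/2}` (here `√(Σ_j lam (n+j))`); the infimum is
attained by `E_n := span(e_0, …, e_{n-1})`, and if `λ_n > λ_{n+1}` then `E_n` is the unique
`n`-dimensional subspace attaining it. -/
theorem stmt6 {H : Type*} [NormedAddCommGroup H] [InnerProductSpace ℝ H] [CompleteSpace H]
    {Ω : Type*} [MeasurableSpace Ω] (μ : Measure Ω) (k : Ω → H)
    (ι : H →L[ℝ] Lp ℝ 2 μ)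
    (hι : ∀ f : H, (ι f : Ω → ℝ) =ᵐ[μ] fun x => ⟪f, k x⟫_ℝ)
    (hinj : Function.Injective ι)
    (e : ℕ → H) (lam : ℕ → ℝ)
    (he : Orthonormal ℝ e)
    (hdense : (Submodule.span ℝ (Set.range e)).topologicalClosure = ⊤)
    (hpos : ∀ j, 0 < lam j) (hmono : ∀ j, lam (j + 1) ≤ lam j)
    (heig : ∀ i j, ⟪ι (e i), ι (e j)⟫_ℝ = if i = j then lam j else 0)
    (hsum : Summable lam)
    (n : ℕ) :
    IsLeast {c : ℝ | ∃ (V : Submodule ℝ H) (p : H →ₗ[ℝ] H),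
          FiniteDimensional ℝ V ∧ Module.finrank ℝ V = n ∧
          (∀ f : H, p f ∈ V ∧ f - p f ∈ Vᗮ) ∧
          c = Real.sqrt (∫ x, ‖k x - p (k x)‖ ^ 2 ∂μ)}
        (Real.sqrt (∑' j : ℕ, lam (n + j))) ∧
      (∀ p : H →ₗ[ℝ] H,
        (∀ f : H, p f ∈ Submodule.span ℝ (e '' Set.Iio n) ∧
            f - p f ∈ (Submodule.span ℝ (e '' Set.Iio n))ᗮ) →
        Real.sqrt (∫ x, ‖k x - p (k x)‖ ^ 2 ∂μ) = Real.sqrt (∑' j : ℕ, lam (n + j))) ∧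
      ((∀ m, m + 1 = n → lam n < lam m) →
        ∀ (V : Submodule ℝ H) (p : H →ₗ[ℝ] H),
          FiniteDimensional ℝ V → Module.finrank ℝ V = n →
          (∀ f : H, p f ∈ V ∧ f - p f ∈ Vᗮ) →
          Real.sqrt (∫ x, ‖k x - p (k x)‖ ^ 2 ∂μ) = Real.sqrt (∑' j : ℕ, lam (n + j)) →
          V = Submodule.span ℝ (e '' Set.Iio n)) := by
  set W : Submodule ℝ H := Submodule.span ℝ (e '' Set.Iio n) with hW
  have hWrange : e '' Set.Iio n = Set.range (fun i : Fin n => e i) := by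
    ext y
    constructor
    · rintro ⟨i, hi, rfl⟩; exact ⟨⟨i, hi⟩, rfl⟩
    · rintro ⟨⟨i, hi⟩, rfl⟩; exact ⟨i, hi, rfl⟩
  have hWfd : FiniteDimensional ℝ W :=
    FiniteDimensional.span_of_finite ℝ ((Set.finite_Iio n).image e)
  have hWrank : Module.finrank ℝ W = n := by
    rw [hW, hWrange]
    have h := finrank_span_eq_card (R := ℝ) (b := fun i : Fin n => e i)
      (he.linearIndependent.comp Fin.val Fin.val_injective)
    rw [Fintype.card_fin] at h
    exact h
  have htail_eq : (∑' j, lam (j + n)) = ∑' j : ℕ, lam (n + j) :=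
    tsum_congr fun j => by rw [Nat.add_comm]
  have htail0 : 0 ≤ ∑' j : ℕ, lam (n + j) := tsum_nonneg fun j => (hpos _).le
  -- general facts for admissible (V, p)
  have key : ∀ (V : Submodule ℝ H) (p : H →ₗ[ℝ] H), FiniteDimensional ℝ V →
      Module.finrank ℝ V = n → (∀ f : H, p f ∈ V ∧ f - p f ∈ Vᗮ) →
      (∫ x, ‖k x - p (k x)‖ ^ 2 ∂μ = ∑' i, lam i * ‖e i - p (e i)‖ ^ 2) ∧
      (∑' j, lam (j + n)) ≤ (∑' i, lam i * ‖e i - p (e i)‖ ^ 2) ∧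
      ((∀ m, m + 1 = n → lam n < lam m) →
        (∑' i, lam i * ‖e i - p (e i)‖ ^ 2) = (∑' j, lam (j + n)) →
        ∀ i < n, ‖e i - p (e i)‖ ^ 2 = 0) := by
    intro V p hfd hrank hp
    haveI := hfd
    have ht0 : ∀ i, 0 ≤ ‖e i - p (e i)‖ ^ 2 := fun i => sq_nonneg _
    have hpy : ∀ i, 1 - ‖e i - p (e i)‖ ^ 2 = ‖p (e i)‖ ^ 2 := fun i => by
      have h := proj_pyth hp (e i)
      rw [he.1 i] at h
      nlinarith
    have ht1 : ∀ i, ‖e i - p (e i)‖ ^ 2 ≤ 1 := fun i => by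
      nlinarith [hpy i, sq_nonneg ‖p (e i)‖]
    have htr := trace_hasSum he hdense hp
    rw [hrank] at htr
    have htr' : HasSum (fun i => 1 - ‖e i - p (e i)‖ ^ 2) (n : ℝ) := by
      have hfe : (fun i => 1 - ‖e i - p (e i)‖ ^ 2) = fun i => ‖p (e i)‖ ^ 2 :=
        funext fun i => hpy i
      rw [hfe]
      exact htr
    have hopt := opt_lemma hpos hmono hsum ht0 ht1 htr'
    exact ⟨integral_power k ι hι he hdense hpos hsum heig hp, hopt.1, hopt.2⟩
  -- value of the weights for the span E_n
  have hEt : ∀ p : H →ₗ[ℝ] H, (∀ f : H, p f ∈ W ∧ f - p f ∈ Wᗮ) →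
      (∑' i, lam i * ‖e i - p (e i)‖ ^ 2) = ∑' j, lam (j + n) := by
    intro p hp
    have hval : ∀ i, lam i * ‖e i - p (e i)‖ ^ 2 = if i < n then 0 else lam i := by
      intro i
      by_cases hi : i < n
      · have hmem : e i ∈ W := Submodule.subset_span ⟨i, hi, rfl⟩
        rw [proj_fix hp hmem]
        simp [hi]
      · push_neg at hi
        have horth : e i ∈ Wᗮ := by
          rw [Submodule.mem_orthogonal]
          intro u hu
          have hle : W ≤ LinearMap.ker ((innerSL ℝ (e i)).toLinearMap) := by
            rw [hW]
            refine Submodule.span_le.mpr ?_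
            rintro _ ⟨j, hj, rfl⟩
            have hij : i ≠ j := by
              intro hij; rw [hij] at hi; exact absurd hj (not_lt.mpr hi)
            simp only [SetLike.mem_coe, LinearMap.mem_ker,
              ContinuousLinearMap.coe_coe, innerSL_apply_apply]
            exact he.2 hij
          have h0 : ⟪e i, u⟫_ℝ = 0 := by
            have := hle hu
            simpa using this
          rw [real_inner_comm]
          exact h0
        have hp0 : p (e i) = 0 := by
          have h1 : p (e i) ∈ W := (hp _).1
          have h2 : p (e i) ∈ Wᗮ := by
            have h3 := Submodule.sub_mem Wᗮ horth (hp (e i)).2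
            simpa using h3
          exact (Submodule.disjoint_def.mp W.orthogonal_disjoint) _ h1 h2
        rw [hp0, sub_zero, he.1 i, if_neg (not_lt.mpr hi)]
        ring
    rw [tsum_congr hval]
    have hsumf : Summable (fun i => if i < n then (0 : ℝ) else lam i) := by
      refine Summable.of_nonneg_of_le (fun i => ?_) (fun i => ?_) hsum
      · by_cases hi : i < n <;> simp [hi, (hpos i).le]
      · by_cases hi : i < n <;> simp [hi, (hpos i).le]
    have hsplit := Summable.sum_add_tsum_nat_add (f := fun i => if i < n then (0 : ℝ) else lam i) n hsumf
    have h0 : (∑ i ∈ Finset.range n, if i < n then (0 : ℝ) else lam i) = 0 :=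
      Finset.sum_eq_zero fun i hi => if_pos (Finset.mem_range.mp hi)
    rw [← hsplit, h0, zero_add]
    exact tsum_congr fun j => if_neg (by omega)
  -- the orthogonal projection onto W
  haveI := hWfd
  haveI : CompleteSpace W := FiniteDimensional.complete ℝ W
  set pW : H →ₗ[ℝ] H := W.subtype.comp (Submodule.orthogonalProjection W).toLinearMap with hpWdef
  have hpW : ∀ f : H, pW f ∈ W ∧ f - pW f ∈ Wᗮ := fun f =>
    ⟨SetLike.coe_mem _, Submodule.sub_starProjection_mem_orthogonal (K := W) f⟩
  refine ⟨⟨?_, ?_⟩, ?_, ?_⟩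
  · -- membership
    refine ⟨W, pW, hWfd, hWrank, hpW, ?_⟩
    have hval : (∫ x, ‖k x - pW (k x)‖ ^ 2 ∂μ) = ∑' j : ℕ, lam (n + j) := by
      rw [(key W pW hWfd hWrank hpW).1, hEt pW hpW, htail_eq]
    rw [hval]
  · -- lower bound
    rintro c ⟨V, p, hfd, hrank, hp, rfl⟩
    obtain ⟨hint, hle, -⟩ := key V p hfd hrank hp
    refine Real.sqrt_le_sqrt ?_
    rw [hint, ← htail_eq]
    exact hle
  · -- attainment
    intro p hp
    have hval : (∫ x, ‖k x - p (k x)‖ ^ 2 ∂μ) = ∑' j : ℕ, lam (n + j) := by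
      rw [integral_power k ι hι he hdense hpos hsum heig hp, hEt p hp, htail_eq]
    rw [hval]
  · -- uniqueness
    intro hgap V p hfd hrank hp hsqrt
    obtain ⟨hint, hle, hstrict⟩ := key V p hfd hrank hp
    have h0 : 0 ≤ ∫ x, ‖k x - p (k x)‖ ^ 2 ∂μ :=
      integral_nonneg fun x => sq_nonneg _
    have heq : (∫ x, ‖k x - p (k x)‖ ^ 2 ∂μ) = ∑' j : ℕ, lam (n + j) :=
      (Real.sqrt_inj h0 htail0).mp hsqrt
    have heq2 : (∑' i, lam i * ‖e i - p (e i)‖ ^ 2) = ∑' j, lam (j + n) := by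
      rw [← hint, heq, ← htail_eq]
    have hzero := hstrict hgap heq2
    have hle2 : W ≤ V := by
      rw [hW]
      refine Submodule.span_le.mpr ?_
      rintro _ ⟨i, hi, rfl⟩
      have h1 : ‖e i - p (e i)‖ ^ 2 = 0 := hzero i hi
      have h2 : e i = p (e i) := by
        have h3 : ‖e i - p (e i)‖ = 0 := by nlinarith [norm_nonneg (e i - p (e i))]
        rw [norm_eq_zero, sub_eq_zero] at h3
        exact h3
      rw [SetLike.mem_coe, h2]
      exact (hp (e i)).1
    exact (Submodule.eq_of_le_of_finrank_eq hle2 (by rw [hWrank, hrank])).symm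
end

section
/- Assume Σ_j λ_j < ∞. Then for every Hilbert orthonormal basis (w_k)_{k≥1} of H and every n ∈ ℕ: Σ_{k=1}^n ‖ι w_k‖²_{L²(μ)} ≤ Σ_{j=1}^n λ_j, Σ_{k≥1} ‖ι w_k‖²_{L²(μ)} = Σ_{j≥1} λ_j, and consequently Σ_{k>n} ‖ι w_k‖²_{L²(μ)} ≥ Σ_{j>n} λ_j, with equality when w_j = e_j for all j. -/
open MeasureTheory
open scoped InnerProductSpace

set_option maxHeartbeats 1000000 in
/-- Assume `Σ_j λ_j < ∞`. For every Hilbert orthonormal basis `(w_k)` of `H`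
(zero-indexed) and every `n`: `Σ_{k<n} ‖ι w_k‖² ≤ Σ_{j<n} λ_j`, `Σ_k ‖ι w_k‖² = Σ_j λ_j`,
hence `Σ_{k≥n} ‖ι w_k‖² ≥ Σ_{j≥n} λ_j`, with equality when `w_j = e_j` for all `j`. -/
theorem stmt7 {H : Type*} [NormedAddCommGroup H] [InnerProductSpace ℝ H] [CompleteSpace H]
    {Ω : Type*} [MeasurableSpace Ω] (μ : Measure Ω) (k : Ω → H)
    (ι : H →L[ℝ] Lp ℝ 2 μ)
    (hι : ∀ f : H, (ι f : Ω → ℝ) =ᵐ[μ] fun x => ⟪f, k x⟫_ℝ)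
    (hinj : Function.Injective ι)
    (e : ℕ → H) (lam : ℕ → ℝ)
    (he : Orthonormal ℝ e)
    (hdense : (Submodule.span ℝ (Set.range e)).topologicalClosure = ⊤)
    (hpos : ∀ j, 0 < lam j) (hmono : ∀ j, lam (j + 1) ≤ lam j)
    (heig : ∀ i j, ⟪ι (e i), ι (e j)⟫_ℝ = if i = j then lam j else 0)
    (hsum : Summable lam)
    (w : ℕ → H) (hw : Orthonormal ℝ w)
    (hwdense : (Submodule.span ℝ (Set.range w)).topologicalClosure = ⊤)
    (n : ℕ) :
    (∑ k ∈ Finset.range n, ‖ι (w k)‖ ^ 2 ≤ ∑ j ∈ Finset.range n, lam j) ∧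
      (∑' k : ℕ, ‖ι (w k)‖ ^ 2 = ∑' j : ℕ, lam j) ∧
      (∑' j : ℕ, lam (n + j) ≤ ∑' k : ℕ, ‖ι (w (n + k))‖ ^ 2) ∧
      ((∀ j, w j = e j) → ∑' k : ℕ, ‖ι (w (n + k))‖ ^ 2 = ∑' j : ℕ, lam (n + j)) := by
  classical
  have hanti : ∀ i j : ℕ, i ≤ j → lam j ≤ lam i :=
    fun i j h => antitone_nat_of_succ_le hmono h
  -- Hilbert bases
  let b : HilbertBasis ℕ ℝ H := HilbertBasis.mk he hdense.ge
  let bw : HilbertBasis ℕ ℝ H := HilbertBasis.mk hw hwdense.ge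
  have hbcoe : ∀ i, b i = e i := fun i =>
    congrFun (HilbertBasis.coe_mk he hdense.ge) i
  have hbwcoe : ∀ i, bw i = w i := fun i =>
    congrFun (HilbertBasis.coe_mk hw hwdense.ge) i
  -- Parseval with respect to `e`
  have hPe : ∀ x : H, HasSum (fun j => ⟪x, e j⟫_ℝ ^ 2) (‖x‖ ^ 2) := by
    intro x
    have := b.hasSum_inner_mul_inner x x
    simp only [hbcoe] at this
    convert this using 2 with j
    · rfl
    · rw [sq, real_inner_comm (e j) x]
    · rw [real_inner_self_eq_norm_sq]
  -- Parseval with respect to `w`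
  have hPw : ∀ x : H, HasSum (fun j => ⟪x, w j⟫_ℝ ^ 2) (‖x‖ ^ 2) := by
    intro x
    have := bw.hasSum_inner_mul_inner x x
    simp only [hbwcoe] at this
    convert this using 2 with j
    · rfl
    · rw [sq, real_inner_comm (w j) x]
    · rw [real_inner_self_eq_norm_sq]
  -- expansion of ι f
  have hexp : ∀ f : H, HasSum (fun i => ⟪f, e i⟫_ℝ • ι (e i)) (ι f) := by
    intro f
    have := (b.hasSum_repr f).mapL ι
    convert this using 2 with i
    rw [_root_.map_smul, b.repr_apply_apply, hbcoe, real_inner_comm]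
  -- inner products with ι (e j)
  have key1 : ∀ (f : H) (j : ℕ), ⟪ι (e j), ι f⟫_ℝ = lam j * ⟪f, e j⟫_ℝ := by
    intro f j
    have h1 := (hexp f).mapL (innerSL ℝ (ι (e j)))
    have h2 : HasSum (fun i : ℕ => if i = j then lam j * ⟪f, e j⟫_ℝ else 0)
        (lam j * ⟪f, e j⟫_ℝ) := hasSum_ite_eq j _
    have heq : (fun i : ℕ => (innerSL ℝ (ι (e j))) (⟪f, e i⟫_ℝ • ι (e i)))
        = fun i : ℕ => if i = j then lam j * ⟪f, e j⟫_ℝ else 0 := by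
      funext i
      simp only [innerSL_apply_apply, inner_smul_right, heig j i]
      by_cases h : i = j
      · subst h; simp [mul_comm]
      · simp [h, Ne.symm h]
    rw [heq] at h1
    simpa using h1.unique h2
  -- norm of ι f in terms of coefficients
  have L1 : ∀ f : H, HasSum (fun j => lam j * ⟪f, e j⟫_ℝ ^ 2) (‖ι f‖ ^ 2) := by
    intro f
    have h1 := (hexp f).mapL (innerSL ℝ (ι f))
    have heq : (fun i : ℕ => (innerSL ℝ (ι f)) (⟪f, e i⟫_ℝ • ι (e i)))
        = fun i : ℕ => lam i * ⟪f, e i⟫_ℝ ^ 2 := by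
      funext i
      simp only [innerSL_apply_apply, inner_smul_right]
      have h := key1 f i
      rw [real_inner_comm] at h
      rw [h]; ring
    rw [heq] at h1
    have : ((innerSL ℝ) (ι f)) (ι f) = ‖ι f‖ ^ 2 := by
      rw [innerSL_apply_apply, real_inner_self_eq_norm_sq]
    rwa [this] at h1
  -- the double family
  set F : ℕ × ℕ → ℝ := fun p => lam p.1 * ⟪w p.2, e p.1⟫_ℝ ^ 2 with hF
  have hFnn : ∀ p, 0 ≤ F p := fun p => mul_nonneg (hpos p.1).le (sq_nonneg _)
  have hFrow : ∀ j : ℕ, HasSum (fun k2 => F (j, k2)) (lam j) := by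
    intro j
    have h1 : HasSum (fun k2 => ⟪e j, w k2⟫_ℝ ^ 2) 1 := by
      have := hPw (e j)
      rwa [he.1 j, one_pow] at this
    have h2 := h1.mul_left (lam j)
    rw [mul_one] at h2
    convert h2 using 2 with k2
    rfl
    rw [real_inner_comm]
  have hFcol : ∀ k2 : ℕ, HasSum (fun j => F (j, k2)) (‖ι (w k2)‖ ^ 2) :=
    fun k2 => L1 (w k2)
  have hFsummable : Summable F := by
    rw [summable_prod_of_nonneg (fun p => hFnn p)]
    refine ⟨fun j => (hFrow j).summable, ?_⟩
    have : (fun j => ∑' k2, F (j, k2)) = lam := by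
      funext j; exact (hFrow j).tsum_eq
    rwa [this]
  -- summability of the norms
  have hnorm_summable : Summable (fun k2 : ℕ => ‖ι (w k2)‖ ^ 2) := by
    have hswap : Summable (F ∘ Prod.swap : ℕ × ℕ → ℝ) :=
      (Equiv.prodComm ℕ ℕ).summable_iff.2 hFsummable
    have h := (summable_prod_of_nonneg (f := F ∘ Prod.swap)
      (fun p => hFnn p.swap)).1 hswap
    have : (fun k2 => ∑' j, F (j, k2)) = fun k2 : ℕ => ‖ι (w k2)‖ ^ 2 := by
      funext k2; exact (hFcol k2).tsum_eq
    have h2 := h.2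
    simpa [Function.comp, this] using h2
  -- total sum equality
  have htotal : ∑' k2 : ℕ, ‖ι (w k2)‖ ^ 2 = ∑' j : ℕ, lam j := by
    have hc : ∑' (k2 : ℕ) (j : ℕ), F (j, k2) = ∑' (j : ℕ) (k2 : ℕ), F (j, k2) :=
      Summable.tsum_comm (f := fun j k2 => F (j, k2)) (by exact hFsummable)
    calc ∑' k2 : ℕ, ‖ι (w k2)‖ ^ 2 = ∑' (k2 : ℕ) (j : ℕ), F (j, k2) := by
          refine tsum_congr fun k2 => ?_
          exact ((hFcol k2).tsum_eq).symm
      _ = ∑' (j : ℕ) (k2 : ℕ), F (j, k2) := hc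
      _ = ∑' j : ℕ, lam j := tsum_congr fun j => (hFrow j).tsum_eq
  -- partial sum inequality, for any m
  have hpart : ∀ m : ℕ,
      ∑ k2 ∈ Finset.range m, ‖ι (w k2)‖ ^ 2 ≤ ∑ j ∈ Finset.range m, lam j := by
    intro m
    set c : ℕ → ℝ := fun j => ∑ k2 ∈ Finset.range m, ⟪w k2, e j⟫_ℝ ^ 2 with hc
    have hc0 : ∀ j, 0 ≤ c j := fun j => Finset.sum_nonneg fun _ _ => sq_nonneg _
    have hc1 : ∀ j, c j ≤ 1 := by
      intro j
      have := hw.sum_inner_products_le (s := Finset.range m) (e j)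
      rw [he.1 j, one_pow] at this
      refine le_trans ?_ this
      refine le_of_eq (Finset.sum_congr rfl fun i _ => ?_)
      simp [Real.norm_eq_abs, sq_abs]
    have hcsum : HasSum c (m : ℝ) := by
      have h1 : ∀ k2 ∈ Finset.range m, HasSum (fun j => ⟪w k2, e j⟫_ℝ ^ 2) 1 := by
        intro k2 _
        have := hPe (w k2)
        rwa [hw.1 k2, one_pow] at this
      have := hasSum_sum h1
      simpa using this
    have hlc : HasSum (fun j => lam j * c j)
        (∑ k2 ∈ Finset.range m, ‖ι (w k2)‖ ^ 2) := by
      have h1 : ∀ k2 ∈ Finset.range m,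
          HasSum (fun j => lam j * ⟪w k2, e j⟫_ℝ ^ 2) (‖ι (w k2)‖ ^ 2) :=
        fun k2 _ => L1 (w k2)
      have := hasSum_sum h1
      convert this using 2 with j
      rw [hc, Finset.mul_sum]
    -- split tails
    have hlcs : Summable (fun j => lam j * c j) := hlc.summable
    have hcs : Summable c := hcsum.summable
    have hsplit1 : ∑ j ∈ Finset.range m, lam j * c j + ∑' i, lam (i + m) * c (i + m)
        = ∑' j, lam j * c j := Summable.sum_add_tsum_nat_add m hlcs
    have hsplit2 : ∑ j ∈ Finset.range m, c j + ∑' i, c (i + m) = (m : ℝ) := by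
      rw [Summable.sum_add_tsum_nat_add m hcs, hcsum.tsum_eq]
    have htail1 : ∑' i, lam (i + m) * c (i + m) ≤ lam m * ∑' i, c (i + m) := by
      rw [← tsum_mul_left]
      refine Summable.tsum_le_tsum (fun i => ?_) ((summable_nat_add_iff m).2 hlcs)
        (((summable_nat_add_iff m).2 hcs).mul_left _)
      exact mul_le_mul_of_nonneg_right (hanti m (i + m) (by omega)) (hc0 _)
    have hctail : ∑' i, c (i + m) = (m : ℝ) - ∑ j ∈ Finset.range m, c j := by
      linarith [hsplit2]
    have hfin : ∑ j ∈ Finset.range m, lam j * c j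
        + lam m * ((m : ℝ) - ∑ j ∈ Finset.range m, c j)
        ≤ ∑ j ∈ Finset.range m, lam j := by
      have : (m : ℝ) - ∑ j ∈ Finset.range m, c j
          = ∑ j ∈ Finset.range m, (1 - c j) := by
        rw [Finset.sum_sub_distrib]
        simp
      rw [this, Finset.mul_sum, ← Finset.sum_add_distrib]
      refine Finset.sum_le_sum fun j hj => ?_
      have hj' : j < m := Finset.mem_range.1 hj
      have h1 : lam m ≤ lam j := hanti j m hj'.le
      nlinarith [hc0 j, hc1 j, (hpos j).le]
    calc ∑ k2 ∈ Finset.range m, ‖ι (w k2)‖ ^ 2 = ∑' j, lam j * c j := hlc.tsum_eq.symm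
      _ = ∑ j ∈ Finset.range m, lam j * c j + ∑' i, lam (i + m) * c (i + m) :=
        hsplit1.symm
      _ ≤ ∑ j ∈ Finset.range m, lam j * c j + lam m * ∑' i, c (i + m) := by
        linarith [htail1]
      _ = ∑ j ∈ Finset.range m, lam j * c j
          + lam m * ((m : ℝ) - ∑ j ∈ Finset.range m, c j) := by rw [hctail]
      _ ≤ ∑ j ∈ Finset.range m, lam j := hfin
  refine ⟨hpart n, htotal, ?_, ?_⟩
  · -- tail inequality
    have h1 : ∑ k2 ∈ Finset.range n, ‖ι (w k2)‖ ^ 2 + ∑' i, ‖ι (w (i + n))‖ ^ 2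
        = ∑' k2, ‖ι (w k2)‖ ^ 2 := Summable.sum_add_tsum_nat_add n hnorm_summable
    have h2 : ∑ j ∈ Finset.range n, lam j + ∑' i, lam (i + n) = ∑' j, lam j :=
      Summable.sum_add_tsum_nat_add n hsum
    have h3 : ∑' j : ℕ, lam (n + j) = ∑' i, lam (i + n) := by
      refine tsum_congr fun i => ?_; rw [add_comm]
    have h4 : ∑' k2 : ℕ, ‖ι (w (n + k2))‖ ^ 2 = ∑' i, ‖ι (w (i + n))‖ ^ 2 := by
      refine tsum_congr fun i => ?_; rw [add_comm]
    rw [h3, h4]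
    have := hpart n
    linarith [h1, h2, htotal]
  · -- equality when w = e
    intro hwe
    refine tsum_congr fun k2 => ?_
    rw [hwe (n + k2)]
    rw [← real_inner_self_eq_norm_sq, heig (n + k2) (n + k2), if_pos rfl]
end

section
/- Let U ⊆ V ⊆ H be closed subspaces with H-orthogonal projections P_U and P_V. Then for every x ∈ Ω: P_U(x)² = ‖P_V(k x) − P_U(k x)‖_H² + P_V(x)², where ‖P_V(k x) − P_U(k x)‖_H is the Power Function of U relative to the native space V (with kernel K_V(x,y) = ⟨P_V k x, P_V k y⟩_H). -/
open scoped InnerProductSpace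

/-- For closed subspaces `U ⊆ V ⊆ H` with `H`-orthogonal projections
`pU` and `pV` (characterized by the usual orthogonality conditions), the Power Functions
are related, for every `x ∈ Ω`, by
`P_U(x)² = ‖pV (k x) − pU (k x)‖² + P_V(x)²`, where `‖pV (k x) − pU (k x)‖` is the Power
Function of `U` relative to the native space `V`. -/
theorem stmt11 {H : Type*} [NormedAddCommGroup H] [InnerProductSpace ℝ H] [CompleteSpace H]
    {Ω : Type*} (k : Ω → H)
    (U V : Submodule ℝ H) (hUV : U ≤ V)
    (hUc : IsClosed (U : Set H)) (hVc : IsClosed (V : Set H))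
    (pU pV : H →ₗ[ℝ] H)
    (hpU : ∀ f : H, pU f ∈ U ∧ f - pU f ∈ Uᗮ)
    (hpV : ∀ f : H, pV f ∈ V ∧ f - pV f ∈ Vᗮ)
    (x : Ω) :
    ‖k x - pU (k x)‖ ^ 2 = ‖pV (k x) - pU (k x)‖ ^ 2 + ‖k x - pV (k x)‖ ^ 2 := by
  have ha : pV (k x) - pU (k x) ∈ V :=
    V.sub_mem (hpV (k x)).1 (hUV (hpU (k x)).1)
  have hb : k x - pV (k x) ∈ Vᗮ := (hpV (k x)).2
  have horth : ⟪pV (k x) - pU (k x), k x - pV (k x)⟫_ℝ = 0 :=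
    Submodule.inner_right_of_mem_orthogonal ha hb
  have hsum : k x - pU (k x) = (pV (k x) - pU (k x)) + (k x - pV (k x)) := by abel
  rw [hsum, norm_add_sq_real, horth]
  ring
end

section
/- Assume Σ_j λ_j < ∞. Let V ⊆ H be a closed subspace of dimension m (possibly infinite) admitting an H-orthonormal basis (u_j)_{1≤j≤m} of V with ⟨ι u_i, ι u_j⟩_{L²(μ)} = λ_{j,V} δ_{ij} and λ_{1,V} ≥ λ_{2,V} ≥ … > 0. Then for every n ≤ m and every n-dimensional subspace V_n ⊆ V: ∫_Ω P_{V_n}(x)² dμ(x) ≥ Σ_{j≥1} λ_j − Σ_{j=1}^n λ_{j,V}, with equality when V_n = span(u_1,…,u_n); in particular ∫_Ω P_V(x)² dμ(x) = Σ_{j≥1} λ_j − Σ_{j=1}^m λ_{j,V}. -/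
open MeasureTheory
open scoped InnerProductSpace ENNReal

namespace Stmt13Aux


variable {Ω : Type*} [MeasurableSpace Ω] {μ : Measure Ω}

lemma nf_eq (f : Lp ℝ 2 μ) :
    ∫⁻ x, ENNReal.ofReal (((f : Ω → ℝ) x) ^ 2) ∂μ = ENNReal.ofReal ⟪f, f⟫_ℝ := by
  have hint : Integrable (fun x => (f : Ω → ℝ) x * (f : Ω → ℝ) x) μ := by
    simpa [RCLike.inner_apply, pow_two] using MeasureTheory.L2.integrable_inner (𝕜 := ℝ) f f
  have h1 : ⟪f, f⟫_ℝ = ∫ x, (f : Ω → ℝ) x * (f : Ω → ℝ) x ∂μ := by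
    rw [MeasureTheory.L2.inner_def]
    simp [RCLike.inner_apply, pow_two]
  rw [h1, MeasureTheory.ofReal_integral_eq_lintegral_ofReal hint
    (Filter.Eventually.of_forall fun x => mul_self_nonneg _)]
  simp [pow_two]

lemma key {H : Type*} [NormedAddCommGroup H] [InnerProductSpace ℝ H]
    (ι : H →L[ℝ] Lp ℝ 2 μ) (v : Ω → H) {I : Type*} [Countable I] (q : I → H)
    (hq : ∀ x, HasSum (fun j => ⟪q j, v x⟫_ℝ ^ 2) (‖v x‖ ^ 2))
    (hq' : ∀ j, (ι (q j) : Ω → ℝ) =ᵐ[μ] fun x => ⟪q j, v x⟫_ℝ) :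
    ((fun x => ENNReal.ofReal (‖v x‖ ^ 2)) =ᵐ[μ]
      fun x => ∑' j, ENNReal.ofReal (((ι (q j) : Ω → ℝ) x) ^ 2)) ∧
    ∫⁻ x, ENNReal.ofReal (‖v x‖ ^ 2) ∂μ = ∑' j, ENNReal.ofReal ⟪ι (q j), ι (q j)⟫_ℝ := by
  have hmeas : ∀ j, AEMeasurable (fun x => ENNReal.ofReal (((ι (q j) : Ω → ℝ) x) ^ 2)) μ :=
    fun j => (((Lp.aestronglyMeasurable (ι (q j))).aemeasurable.pow_const 2)).ennreal_ofReal
  have hae : ∀ᵐ x ∂μ, ∀ j, (ι (q j) : Ω → ℝ) x = ⟪q j, v x⟫_ℝ := ae_all_iff.2 hq'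
  have h0 : (fun x => ENNReal.ofReal (‖v x‖ ^ 2)) =ᵐ[μ]
      fun x => ∑' j, ENNReal.ofReal (((ι (q j) : Ω → ℝ) x) ^ 2) := by
    filter_upwards [hae] with x hx
    rw [← (hq x).tsum_eq,
      ENNReal.ofReal_tsum_of_nonneg (fun j => sq_nonneg _) (hq x).summable]
    exact tsum_congr fun j => by rw [hx j]
  refine ⟨h0, ?_⟩
  rw [lintegral_congr_ae h0, lintegral_tsum hmeas]
  exact tsum_congr fun j => nf_eq _



lemma hb_of {H : Type*} [NormedAddCommGroup H] [InnerProductSpace ℝ H] [CompleteSpace H]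
    (W : Submodule ℝ H) (hWc : IsClosed (W : Set H)) {I : Type*} (w : I → H)
    (hw_on : Orthonormal ℝ w) (hw_mem : ∀ i, w i ∈ W)
    (hw_dense : (W : Set H) ⊆ closure ((Submodule.span ℝ (Set.range w) : Submodule ℝ H) : Set H)) :
    haveI : CompleteSpace W := hWc.completeSpace_coe
    ∃ b : HilbertBasis I ℝ W, ∀ i, ((b i : W) : H) = w i := by
  haveI : CompleteSpace W := hWc.completeSpace_coe
  classical
  set w' : I → W := fun i => ⟨w i, hw_mem i⟩ with hw'
  have hon' : Orthonormal ℝ w' := by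
    rw [orthonormal_iff_ite] at hw_on ⊢
    intro i j
    rw [Submodule.coe_inner]
    simpa using hw_on i j
  have himg : (Subtype.val : W → H) '' Set.range w' = Set.range w := by
    ext y; constructor
    · rintro ⟨z, ⟨i, rfl⟩, rfl⟩; exact ⟨i, rfl⟩
    · rintro ⟨i, rfl⟩; exact ⟨w' i, ⟨i, rfl⟩, rfl⟩
  have hspan : (Subtype.val : W → H) '' ((Submodule.span ℝ (Set.range w') : Submodule ℝ W) : Set W)
      = ((Submodule.span ℝ (Set.range w) : Submodule ℝ H) : Set H) := by
    have h1 : Submodule.span ℝ ((W.subtype : W →ₗ[ℝ] H) '' Set.range w')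
        = Submodule.map W.subtype (Submodule.span ℝ (Set.range w')) := Submodule.span_image _
    have h2 : (W.subtype : W →ₗ[ℝ] H) '' Set.range w' = Set.range w := by
      simpa using himg
    rw [h2] at h1
    rw [h1, Submodule.map_coe]
    simp
  have hdense' : ⊤ ≤ (Submodule.span ℝ (Set.range w')).topologicalClosure := by
    intro x _
    have hx : (x : H) ∈ closure ((Submodule.span ℝ (Set.range w) : Submodule ℝ H) : Set H) :=
      hw_dense x.2
    have : x ∈ closure ((Submodule.span ℝ (Set.range w') : Submodule ℝ W) : Set W) := by
      rw [Topology.IsInducing.subtypeVal.closure_eq_preimage_closure_image]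
      show (x : H) ∈ closure (Subtype.val '' _)
      convert hx using 2
      exact hspan
    rwa [← SetLike.mem_coe, Submodule.topologicalClosure_coe]
  refine ⟨HilbertBasis.mk hon' hdense', fun i => ?_⟩
  have := HilbertBasis.coe_mk hon' hdense'
  have h2 : (HilbertBasis.mk hon' hdense') i = w' i := congrFun this i
  rw [h2]

lemma major (L D : ℕ → ℝ) (n : ℕ) (hL0 : ∀ j, 0 ≤ L j) (hLa : ∀ j, L (j + 1) ≤ L j)
    (hD0 : ∀ j, 0 ≤ D j) (hD1 : ∀ j, D j ≤ 1) (hD : HasSum D (n : ℝ))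
    (hS : Summable fun j => L j * D j) :
    ∑' j, L j * D j ≤ ∑ j ∈ Finset.range n, L j := by
  have hLmono : Antitone L := antitone_nat_of_succ_le hLa
  have hsplit := Summable.sum_add_tsum_nat_add (f := fun j => L j * D j) n hS
  have hDsum := hD.summable
  have hDsplit := Summable.sum_add_tsum_nat_add (f := D) n hDsum
  rw [hD.tsum_eq] at hDsplit
  have htail : ∑' j, L (j + n) * D (j + n) ≤ L n * ∑' j, D (j + n) := by
    rw [← tsum_mul_left]
    refine Summable.tsum_le_tsum (fun j => ?_) ((summable_nat_add_iff n).2 hS)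
      (((summable_nat_add_iff n).2 hDsum).mul_left _)
    exact mul_le_mul_of_nonneg_right (hLmono (Nat.le_add_left n j)) (hD0 _)
  have hhead : ∑ j ∈ Finset.range n, L j * D j
      ≤ ∑ j ∈ Finset.range n, (L j + L n * D j - L n) := by
    refine Finset.sum_le_sum fun j hj => ?_
    have hjn : L n ≤ L j := hLmono (Nat.le_of_lt (Finset.mem_range.1 hj))
    nlinarith [hD1 j, hD0 j]
  have hexp : ∑ j ∈ Finset.range n, (L j + L n * D j - L n)
      = ∑ j ∈ Finset.range n, L j + L n * ∑ j ∈ Finset.range n, D j - n * L n := by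
    rw [Finset.sum_sub_distrib, Finset.sum_add_distrib, ← Finset.mul_sum]
    simp [mul_comm]
  have hDt : ∑' j, D (j + n) = (n : ℝ) - ∑ j ∈ Finset.range n, D j := by linarith
  calc ∑' j, L j * D j
      = ∑ j ∈ Finset.range n, L j * D j + ∑' j, L (j + n) * D (j + n) := hsplit.symm
    _ ≤ (∑ j ∈ Finset.range n, L j + L n * ∑ j ∈ Finset.range n, D j - n * L n)
        + L n * ((n : ℝ) - ∑ j ∈ Finset.range n, D j) := by
        rw [← hexp, ← hDt]; exact add_le_add hhead htail
    _ = ∑ j ∈ Finset.range n, L j := by ring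



variable {Ω : Type*} [MeasurableSpace Ω] {μ : Measure Ω}


lemma core {H : Type*} [NormedAddCommGroup H] [InnerProductSpace ℝ H] [CompleteSpace H]
    (μ : Measure Ω) (k : Ω → H) (ι : H →L[ℝ] Lp ℝ 2 μ)
    (hι : ∀ f : H, (ι f : Ω → ℝ) =ᵐ[μ] fun x => ⟪f, k x⟫_ℝ)
    (e : ℕ → H) (lam : ℕ → ℝ) (he : Orthonormal ℝ e)
    (hdense : (Submodule.span ℝ (Set.range e)).topologicalClosure = ⊤)
    (heig : ∀ i j, ⟪ι (e i), ι (e j)⟫_ℝ = if i = j then lam j else 0)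
    (hsum : Summable lam)
    {I : Type*} [Countable I]
    (W : Submodule ℝ H) (hWc : IsClosed (W : Set H)) (w : I → H)
    (hw_on : Orthonormal ℝ w) (hw_mem : ∀ i, w i ∈ W)
    (hw_dense : (W : Set H) ⊆ closure ((Submodule.span ℝ (Set.range w) : Submodule ℝ H) : Set H))
    (p : H →ₗ[ℝ] H) (hp : ∀ f : H, p f ∈ W ∧ f - p f ∈ Wᗮ) :
    Summable (fun i => ⟪ι (w i), ι (w i)⟫_ℝ) ∧
      ∫ x, ‖k x - p (k x)‖ ^ 2 ∂μ
        = ∑' j, lam j - ∑' i, ⟪ι (w i), ι (w i)⟫_ℝ := by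
  haveI : CompleteSpace W := hWc.completeSpace_coe
  obtain ⟨bW, hbW⟩ := hb_of W hWc w hw_on hw_mem hw_dense
  have hlam0 : ∀ j, 0 ≤ lam j := by
    intro j
    have := heig j j
    rw [if_pos rfl] at this
    rw [← this]
    exact real_inner_self_nonneg
  set b : HilbertBasis ℕ ℝ H := HilbertBasis.mk he hdense.ge with hb
  have hbcoe : ∀ j, b j = e j := congrFun (HilbertBasis.coe_mk he hdense.ge)
  -- Parseval in H
  have hpars : ∀ v : H, HasSum (fun j => ⟪e j, v⟫_ℝ ^ 2) (‖v‖ ^ 2) := by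
    intro v
    have h := b.hasSum_inner_mul_inner v v
    rw [real_inner_self_eq_norm_sq] at h
    have h2 : (fun j => ⟪e j, v⟫_ℝ ^ 2) = fun j => ⟪v, b j⟫_ℝ * ⟪b j, v⟫_ℝ := by
      funext j
      rw [hbcoe j, pow_two, real_inner_comm v (e j)]
    rw [h2]
    exact h
  -- Parseval in W
  have hparsW : ∀ y : H, y ∈ W → HasSum (fun i => ⟪w i, y⟫_ℝ ^ 2) (‖y‖ ^ 2) := by
    intro y hy
    have h := bW.hasSum_inner_mul_inner (⟨y, hy⟩ : W) (⟨y, hy⟩ : W)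
    rw [real_inner_self_eq_norm_sq] at h
    have hny : ‖(⟨y, hy⟩ : W)‖ = ‖y‖ := rfl
    rw [hny] at h
    have h2 : (fun i => ⟪w i, y⟫_ℝ ^ 2)
        = fun i => ⟪(⟨y, hy⟩ : W), bW i⟫_ℝ * ⟪bW i, (⟨y, hy⟩ : W)⟫_ℝ := by
      funext i
      rw [Submodule.coe_inner, Submodule.coe_inner, hbW i]
      show ⟪w i, y⟫_ℝ ^ 2 = ⟪y, w i⟫_ℝ * ⟪w i, y⟫_ℝ
      rw [pow_two, real_inner_comm y (w i)]
    rw [h2]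
    exact h
  -- orthogonality facts
  have hoWperp : ∀ (z : H), z ∈ Wᗮ → ∀ (y : H), y ∈ W → ⟪z, y⟫_ℝ = 0 := by
    intro z hz y hy
    rw [real_inner_comm]
    exact (Submodule.mem_orthogonal W z).1 hz y hy
  have hw_k : ∀ i x, ⟪w i, k x⟫_ℝ = ⟪w i, p (k x)⟫_ℝ := by
    intro i x
    have h0 : ⟪w i, k x - p (k x)⟫_ℝ = 0 :=
      (Submodule.mem_orthogonal W _).1 (hp (k x)).2 (w i) (hw_mem i)
    rw [inner_sub_right] at h0
    linarith
  have hq1 : ∀ j x, ⟪e j - p (e j), k x - p (k x)⟫_ℝ = ⟪e j, k x - p (k x)⟫_ℝ := by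
    intro j x
    have h0 : ⟪p (e j), k x - p (k x)⟫_ℝ = 0 :=
      (Submodule.mem_orthogonal W _).1 (hp (k x)).2 (p (e j)) (hp (e j)).1
    rw [inner_sub_left, h0, sub_zero]
  have hq2 : ∀ j x, ⟪e j - p (e j), k x⟫_ℝ = ⟪e j - p (e j), k x - p (k x)⟫_ℝ := by
    intro j x
    have h0 : ⟪e j - p (e j), p (k x)⟫_ℝ = 0 :=
      hoWperp _ (hp (e j)).2 _ (hp (k x)).1
    rw [inner_sub_right, h0, sub_zero]
  -- three applications of key
  obtain ⟨hA0, hAeq⟩ := key ι (fun x => k x - p (k x)) (fun j : ℕ => e j - p (e j))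
    (fun x => by
      have h := hpars (k x - p (k x))
      have h2 : (fun j => ⟪e j - p (e j), k x - p (k x)⟫_ℝ ^ 2)
          = fun j => ⟪e j, k x - p (k x)⟫_ℝ ^ 2 := funext fun j => by rw [hq1 j x]
      rw [h2]
      exact h)
    (fun j => by
      filter_upwards [hι (e j - p (e j))] with x hx
      rw [hx, hq2 j x])
  obtain ⟨hB0, hBeq⟩ := key ι (fun x => p (k x)) w
    (fun x => hparsW _ (hp (k x)).1)
    (fun i => by
      filter_upwards [hι (w i)] with x hx
      rw [hx, hw_k i x])
  obtain ⟨hT0, hTeq⟩ := key ι k e (fun x => hpars (k x)) (fun j => hι (e j))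
  set A := ∫⁻ x, ENNReal.ofReal (‖k x - p (k x)‖ ^ 2) ∂μ with hA
  set B := ∫⁻ x, ENNReal.ofReal (‖p (k x)‖ ^ 2) ∂μ with hBdef
  set T := ∫⁻ x, ENNReal.ofReal (‖k x‖ ^ 2) ∂μ with hT
  have hTval : T = ENNReal.ofReal (∑' j, lam j) := by
    rw [hTeq, ENNReal.ofReal_tsum_of_nonneg hlam0 hsum]
    refine tsum_congr fun j => ?_
    rw [heig j j, if_pos rfl]
  have hTne : T ≠ ⊤ := by rw [hTval]; exact ENNReal.ofReal_ne_top
  -- measurability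
  have hAmeasS : AEMeasurable
      (fun x => ∑' j, ENNReal.ofReal (((ι (e j - p (e j)) : Ω → ℝ) x) ^ 2)) μ :=
    AEMeasurable.ennreal_tsum fun j =>
      ((Lp.aestronglyMeasurable (ι (e j - p (e j)))).aemeasurable.pow_const 2).ennreal_ofReal
  have hAmeas : AEMeasurable (fun x => ENNReal.ofReal (‖k x - p (k x)‖ ^ 2)) μ :=
    hAmeasS.congr hA0.symm
  -- Pythagoras
  have hPy : ∀ x, ENNReal.ofReal (‖k x‖ ^ 2)
      = ENNReal.ofReal (‖k x - p (k x)‖ ^ 2) + ENNReal.ofReal (‖p (k x)‖ ^ 2) := by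
    intro x
    have h0 : ⟪k x - p (k x), p (k x)⟫_ℝ = 0 := hoWperp _ (hp (k x)).2 _ (hp (k x)).1
    have hsum' : ‖k x‖ ^ 2 = ‖k x - p (k x)‖ ^ 2 + ‖p (k x)‖ ^ 2 := by
      have h1 : k x = (k x - p (k x)) + p (k x) := by abel
      calc ‖k x‖ ^ 2 = ‖(k x - p (k x)) + p (k x)‖ ^ 2 := by rw [← h1]
        _ = ‖k x - p (k x)‖ ^ 2 + 2 * ⟪k x - p (k x), p (k x)⟫_ℝ + ‖p (k x)‖ ^ 2 :=
            norm_add_sq_real _ _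
        _ = ‖k x - p (k x)‖ ^ 2 + ‖p (k x)‖ ^ 2 := by rw [h0]; ring
    rw [hsum', ENNReal.ofReal_add (sq_nonneg _) (sq_nonneg _)]
  have hT_AB : T = A + B := by
    rw [hT, hA, hBdef, lintegral_congr fun x => hPy x, lintegral_add_left' hAmeas]
  have hAne : A ≠ ⊤ := by
    intro h
    rw [hT_AB, h] at hTne
    exact hTne (by simp)
  have hBne : B ≠ ⊤ := by
    intro h
    rw [hT_AB, h] at hTne
    exact hTne (by simp)
  have ha0 : ∀ i, (0:ℝ) ≤ ⟪ι (w i), ι (w i)⟫_ℝ := fun i => real_inner_self_nonneg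
  have hasummable : Summable (fun i => ⟪ι (w i), ι (w i)⟫_ℝ) := by
    have h1 : Summable (fun i => (ENNReal.ofReal ⟪ι (w i), ι (w i)⟫_ℝ).toReal) := by
      refine ENNReal.summable_toReal ?_
      rw [← hBeq]
      exact hBne
    refine h1.congr fun i => ?_
    rw [ENNReal.toReal_ofReal (ha0 i)]
  have htsum_a : ∑' i, ⟪ι (w i), ι (w i)⟫_ℝ = B.toReal := by
    have h1 : ENNReal.ofReal (∑' i, ⟪ι (w i), ι (w i)⟫_ℝ) = B := by
      rw [ENNReal.ofReal_tsum_of_nonneg ha0 hasummable]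
      exact hBeq.symm
    rw [← h1, ENNReal.toReal_ofReal (tsum_nonneg ha0)]
  refine ⟨hasummable, ?_⟩
  have hsm : AEStronglyMeasurable (fun x => ‖k x - p (k x)‖ ^ 2) μ := by
    rw [aestronglyMeasurable_iff_aemeasurable]
    refine (hAmeas.ennreal_toReal).congr ?_
    exact Filter.Eventually.of_forall fun x => ENNReal.toReal_ofReal (sq_nonneg _)
  have hint_eq : ∫ x, ‖k x - p (k x)‖ ^ 2 ∂μ = A.toReal :=
    integral_eq_lintegral_of_nonneg_ae (Filter.Eventually.of_forall fun x => sq_nonneg _) hsm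
  have htoReal : T.toReal = A.toReal + B.toReal := by
    rw [hT_AB, ENNReal.toReal_add hAne hBne]
  have hTtoReal : T.toReal = ∑' j, lam j := by
    rw [hTval, ENNReal.toReal_ofReal (tsum_nonneg hlam0)]
  rw [hint_eq, htsum_a]
  linarith


end Stmt13Aux
open Stmt13Aux

/-- Assume `Σ_j λ_j < ∞`. Let `V ⊆ H` be a closed subspace of dimension
`m` (possibly infinite), with an `H`-orthonormal basis `(u_j)_{j < m}` of `V` satisfying
`⟪ι u_i, ι u_j⟫_{L²} = λ_{j,V} δ_{ij}` with `λ_{0,V} ≥ λ_{1,V} ≥ … > 0`. Then for every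
`n ≤ m` and every `n`-dimensional subspace `V_n ⊆ V` with `H`-orthogonal projection `p`:
`∫ P_{V_n}² dμ ≥ Σ_j λ_j − Σ_{j<n} λ_{j,V}`, with equality when `V_n = span(u_0,…,u_{n-1})`;
in particular `∫ P_V² dμ = Σ_j λ_j − Σ_{j<m} λ_{j,V}`. -/
theorem stmt13 {H : Type*} [NormedAddCommGroup H] [InnerProductSpace ℝ H] [CompleteSpace H]
    {Ω : Type*} [MeasurableSpace Ω] (μ : Measure Ω) (k : Ω → H)
    (ι : H →L[ℝ] Lp ℝ 2 μ)
    (hι : ∀ f : H, (ι f : Ω → ℝ) =ᵐ[μ] fun x => ⟪f, k x⟫_ℝ)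
    (hinj : Function.Injective ι)
    (e : ℕ → H) (lam : ℕ → ℝ)
    (he : Orthonormal ℝ e)
    (hdense : (Submodule.span ℝ (Set.range e)).topologicalClosure = ⊤)
    (hpos : ∀ j, 0 < lam j) (hmono : ∀ j, lam (j + 1) ≤ lam j)
    (heig : ∀ i j, ⟪ι (e i), ι (e j)⟫_ℝ = if i = j then lam j else 0)
    (hsum : Summable lam)
    (V : Submodule ℝ H) (hVc : IsClosed (V : Set H))
    (m : ℕ∞) (u : ℕ → H) (lamV : ℕ → ℝ)
    (humem : ∀ j : ℕ, (j : ℕ∞) < m → u j ∈ V)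
    (huon : ∀ i j : ℕ, (i : ℕ∞) < m → (j : ℕ∞) < m →
      ⟪u i, u j⟫_ℝ = if i = j then 1 else 0)
    (huspan : (Submodule.span ℝ (u '' {j : ℕ | (j : ℕ∞) < m})).topologicalClosure = V)
    (hlamV : ∀ i j : ℕ, (i : ℕ∞) < m → (j : ℕ∞) < m →
      ⟪ι (u i), ι (u j)⟫_ℝ = if i = j then lamV j else 0)
    (hlamVpos : ∀ j : ℕ, (j : ℕ∞) < m → 0 < lamV j)
    (hlamVmono : ∀ j : ℕ, ((j + 1 : ℕ) : ℕ∞) < m → lamV (j + 1) ≤ lamV j)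
    (n : ℕ) (hn : (n : ℕ∞) ≤ m) :
    (∀ (Vn : Submodule ℝ H) (p : H →ₗ[ℝ] H),
        Vn ≤ V → FiniteDimensional ℝ Vn → Module.finrank ℝ Vn = n →
        (∀ f : H, p f ∈ Vn ∧ f - p f ∈ Vnᗮ) →
        ∑' j : ℕ, lam j - ∑ j ∈ Finset.range n, lamV j ≤ ∫ x, ‖k x - p (k x)‖ ^ 2 ∂μ) ∧
      (∀ p : H →ₗ[ℝ] H,
        (∀ f : H, p f ∈ Submodule.span ℝ (u '' Set.Iio n) ∧
            f - p f ∈ (Submodule.span ℝ (u '' Set.Iio n))ᗮ) →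
        ∫ x, ‖k x - p (k x)‖ ^ 2 ∂μ = ∑' j : ℕ, lam j - ∑ j ∈ Finset.range n, lamV j) ∧
      (∀ p : H →ₗ[ℝ] H,
        (∀ f : H, p f ∈ V ∧ f - p f ∈ Vᗮ) →
        ∫ x, ‖k x - p (k x)‖ ^ 2 ∂μ
          = ∑' j : ℕ, lam j - ∑' j : {j : ℕ // (j : ℕ∞) < m}, lamV j) := by
  have hcast : ∀ {j : ℕ}, j < n → (j : ℕ∞) < m := by
    intro j hj
    exact lt_of_lt_of_le (by exact_mod_cast hj) hn
  refine ⟨?_, ?_, ?_⟩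
  · -- Part 1
    intro Vn p hsub hfd hrank hp
    haveI := hfd
    have hWc : IsClosed (Vn : Set H) := Vn.closed_of_finiteDimensional
    set g : Fin n → Vn := fun i => (stdOrthonormalBasis ℝ Vn) (Fin.cast hrank.symm i) with hg
    set w : Fin n → H := fun i => (g i : H) with hwdef
    have hg_on : Orthonormal ℝ g :=
      (stdOrthonormalBasis ℝ Vn).orthonormal.comp _ (Fin.cast_injective _)
    have hw_on : Orthonormal ℝ w := by
      refine orthonormal_iff_ite.2 fun i j => ?_
      have h2 := orthonormal_iff_ite.1 hg_on i j
      rwa [Submodule.coe_inner] at h2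
    have hw_mem : ∀ i : Fin n, w i ∈ Vn := fun i => (g i).2
    have hspan : Submodule.span ℝ (Set.range w) = Vn := by
      have hr : Set.range g = Set.range (stdOrthonormalBasis ℝ Vn) := by
        ext v; constructor
        · rintro ⟨i, rfl⟩; exact ⟨_, rfl⟩
        · rintro ⟨i, rfl⟩
          exact ⟨Fin.cast hrank i, congrArg _ (Fin.ext rfl)⟩
      have h1 : Submodule.span ℝ (Set.range g) = (⊤ : Submodule ℝ Vn) := by
        rw [hr, ← OrthonormalBasis.coe_toBasis, Module.Basis.span_eq]
      have h2 : Set.range w = (Vn.subtype : Vn →ₗ[ℝ] H) '' Set.range g := by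
        ext y; constructor
        · rintro ⟨i, rfl⟩; exact ⟨g i, ⟨i, rfl⟩, rfl⟩
        · rintro ⟨z, ⟨i, rfl⟩, rfl⟩; exact ⟨i, rfl⟩
      rw [h2, Submodule.span_image, h1, Submodule.map_subtype_top]
    have hw_dense : (Vn : Set H)
        ⊆ closure ((Submodule.span ℝ (Set.range w) : Submodule ℝ H) : Set H) := by
      rw [hspan]; exact subset_closure
    obtain ⟨hsummable, heq⟩ := core μ k ι hι e lam he hdense heig hsum Vn hWc w hw_on hw_mem
      hw_dense p hp
    set a : Fin n → ℝ := fun i => ⟪ι (w i), ι (w i)⟫_ℝ with ha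
    -- Hilbert basis of V from u
    set uu : {j : ℕ // (j : ℕ∞) < m} → H := fun j => u j with huu
    have huu_on : Orthonormal ℝ uu := by
      refine orthonormal_iff_ite.2 fun i j => ?_
      simp only [huu]
      rw [huon i j i.2 j.2]
      by_cases h : i = j
      · subst h; rw [if_pos rfl, if_pos rfl]
      · rw [if_neg (fun hh => h (Subtype.ext hh)), if_neg h]
    have huu_mem : ∀ i, uu i ∈ V := fun i => humem i i.2
    have huu_range : Set.range uu = u '' {j : ℕ | (j : ℕ∞) < m} := by
      ext y; constructor
      · rintro ⟨i, rfl⟩; exact ⟨i, i.2, rfl⟩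
      · rintro ⟨j, hj, rfl⟩; exact ⟨⟨j, hj⟩, rfl⟩
    have huu_dense : (V : Set H)
        ⊆ closure ((Submodule.span ℝ (Set.range uu) : Submodule ℝ H) : Set H) := by
      rw [huu_range, ← Submodule.topologicalClosure_coe, huspan]
    obtain ⟨bV, hbV⟩ := hb_of V hVc uu huu_on huu_mem huu_dense
    set y : Fin n → V := fun i => ⟨w i, hsub (hw_mem i)⟩ with hy
    set c : Fin n → {j : ℕ // (j : ℕ∞) < m} → ℝ := fun i j => ⟪u j, w i⟫_ℝ with hc
    have hrep : ∀ i, HasSum (fun j : {j : ℕ // (j : ℕ∞) < m} => c i j • u (j : ℕ)) (w i) := by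
      intro i
      have h := (bV.hasSum_repr (y i)).mapL V.subtypeL
      have h2 : (fun j => V.subtypeL ((bV.repr (y i)) j • bV j))
          = fun j => c i j • u (j : ℕ) := by
        funext j
        rw [_root_.map_smul, Submodule.subtypeL_apply, hbV j,
          HilbertBasis.repr_apply_apply, Submodule.coe_inner, hbV j]
      rw [h2] at h
      exact h
    have hL2 : ∀ i, HasSum (fun j : {j : ℕ // (j : ℕ∞) < m} => c i j • ι (u (j : ℕ))) (ι (w i)) := by
      intro i
      have h := (hrep i).mapL ι
      have h2 : (fun j => ι (c i j • u (j : ℕ))) = fun j => c i j • ι (u (j : ℕ)) :=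
        funext fun j => _root_.map_smul ι _ _
      rwa [h2] at h
    have hinner : ∀ i (j : {j : ℕ // (j : ℕ∞) < m}),
        ⟪ι (u (j : ℕ)), ι (w i)⟫_ℝ = c i j * lamV (j : ℕ) := by
      intro i j
      have h := (hL2 i).mapL (innerSL ℝ (ι (u (j : ℕ))))
      have h2 : (fun j' => innerSL ℝ (ι (u (j : ℕ))) (c i j' • ι (u (j' : ℕ))))
          = fun j' => if j' = j then c i j * lamV (j : ℕ) else 0 := by
        funext j'
        rw [innerSL_apply_apply, inner_smul_right, hlamV j j' j.2 j'.2]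
        by_cases hjj : j' = j
        · subst hjj; rw [if_pos rfl, if_pos rfl]
        · rw [if_neg (fun hh => hjj (Subtype.ext hh.symm)), mul_zero, if_neg hjj]
      rw [h2] at h
      exact h.unique (hasSum_ite_eq j _)
    have hFA : ∀ i, HasSum (fun j : {j : ℕ // (j : ℕ∞) < m} => lamV (j : ℕ) * c i j ^ 2) (a i) := by
      intro i
      have h := (hL2 i).mapL (innerSL ℝ (ι (w i)))
      have h2 : (fun j : {j : ℕ // (j : ℕ∞) < m} => innerSL ℝ (ι (w i)) (c i j • ι (u (j : ℕ))))
          = fun j : {j : ℕ // (j : ℕ∞) < m} => lamV (j : ℕ) * c i j ^ 2 := by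
        funext j
        rw [innerSL_apply_apply, inner_smul_right, real_inner_comm, hinner i j]
        ring
      rw [h2] at h
      exact h
    have hFB : ∀ i, HasSum (fun j : {j : ℕ // (j : ℕ∞) < m} => c i j ^ 2) 1 := by
      intro i
      have h := bV.hasSum_inner_mul_inner (y i) (y i)
      have hval : ⟪y i, y i⟫_ℝ = 1 := by
        rw [Submodule.coe_inner]
        show ⟪w i, w i⟫_ℝ = 1
        rw [real_inner_self_eq_norm_sq, hw_on.1 i, one_pow]
      rw [hval] at h
      have h2 : (fun j => ⟪y i, bV j⟫_ℝ * ⟪bV j, y i⟫_ℝ) = fun j => c i j ^ 2 := by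
        funext j
        rw [Submodule.coe_inner, Submodule.coe_inner]
        have h3 : ((bV j : V) : H) = u (j : ℕ) := hbV j
        rw [h3]
        show ⟪w i, u (j:ℕ)⟫_ℝ * ⟪u (j:ℕ), w i⟫_ℝ = c i j ^ 2
        simp only [hc]
        rw [real_inner_comm (w i), pow_two]
      rw [h2] at h
      exact h
    have hFC : ∀ j : {j : ℕ // (j : ℕ∞) < m}, ∑ i : Fin n, c i j ^ 2 ≤ 1 := by
      intro j
      have h := hw_on.sum_inner_products_le (𝕜 := ℝ) (u (j : ℕ)) (s := Finset.univ)
      have hn1 : ‖u (j : ℕ)‖ ^ 2 = 1 := by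
        rw [← real_inner_self_eq_norm_sq, huon j j j.2 j.2, if_pos rfl]
      rw [hn1] at h
      refine le_trans (le_of_eq ?_) h
      refine Finset.sum_congr rfl fun i _ => ?_
      simp only [hc]
      rw [Real.norm_eq_abs, sq_abs, real_inner_comm]
    -- extend to ℕ
    set F : Fin n → ℕ → ℝ :=
      fun i j => if h : (j : ℕ∞) < m then lamV j * ⟪u j, w i⟫_ℝ ^ 2 else 0 with hF
    set DD : Fin n → ℕ → ℝ :=
      fun i j => if h : (j : ℕ∞) < m then ⟪u j, w i⟫_ℝ ^ 2 else 0 with hDD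
    set D : ℕ → ℝ := fun j => ∑ i : Fin n, DD i j with hD
    set L : ℕ → ℝ := fun j => if (j : ℕ∞) < m then lamV j else 0 with hL
    have hFsum : ∀ i, HasSum (F i) (a i) := by
      intro i
      refine (hasSum_subtype_iff_of_support_subset (s := {j : ℕ | (j : ℕ∞) < m}) ?_).1 ?_
      · intro j hj
        by_contra hjm
        apply hj
        have hjm' : ¬ ((j : ℕ∞) < m) := hjm
        simp only [hF]
        rw [dif_neg hjm']
      · have h2 : (F i ∘ Subtype.val : {j : ℕ | (j : ℕ∞) < m} → ℝ)
            = fun j : {j : ℕ // (j : ℕ∞) < m} => lamV (j : ℕ) * c i j ^ 2 := by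
          funext j
          show F i (j : ℕ) = _
          have hj2 : ((j : ℕ) : ℕ∞) < m := j.2
          simp only [hF, hc]
          rw [dif_pos hj2]
        rw [h2]
        exact hFA i
    have hDDsum : ∀ i, HasSum (DD i) 1 := by
      intro i
      refine (hasSum_subtype_iff_of_support_subset (s := {j : ℕ | (j : ℕ∞) < m}) ?_).1 ?_
      · intro j hj
        by_contra hjm
        apply hj
        have hjm' : ¬ ((j : ℕ∞) < m) := hjm
        simp only [hDD]
        rw [dif_neg hjm']
      · have h2 : (DD i ∘ Subtype.val : {j : ℕ | (j : ℕ∞) < m} → ℝ)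
            = fun j : {j : ℕ // (j : ℕ∞) < m} => c i j ^ 2 := by
          funext j
          show DD i (j : ℕ) = _
          have hj2 : ((j : ℕ) : ℕ∞) < m := j.2
          simp only [hDD, hc]
          rw [dif_pos hj2]
        rw [h2]
        exact hFB i
    have hDsum : HasSum D ((n : ℝ)) := by
      have h := hasSum_sum (s := Finset.univ) (f := DD) (a := fun _ => (1:ℝ))
        (fun i _ => hDDsum i)
      have hval : (∑ _i : Fin n, (1:ℝ)) = (n : ℝ) := by simp
      rw [hval] at h
      rw [hD]
      exact h
    have hLD : (fun j => L j * D j) = fun j => ∑ i : Fin n, F i j := by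
      funext j
      by_cases h : (j : ℕ∞) < m
      · rw [hL, hD, hF, hDD]
        simp only [if_pos h, dif_pos h]
        rw [Finset.mul_sum]
      · rw [hL, hD, hF, hDD]
        simp only [if_neg h, dif_neg h]
        rw [zero_mul, Finset.sum_const_zero]
    have hLDsum : HasSum (fun j => L j * D j) (∑ i : Fin n, a i) := by
      rw [hLD]
      exact hasSum_sum fun i _ => hFsum i
    have hL0 : ∀ j, 0 ≤ L j := by
      intro j
      simp only [hL]
      split_ifs with h
      · exact (hlamVpos j h).le
      · exact le_refl 0
    have hLa : ∀ j, L (j + 1) ≤ L j := by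
      intro j
      by_cases h : ((j + 1 : ℕ) : ℕ∞) < m
      · have hj : (j : ℕ∞) < m :=
          lt_trans (by exact_mod_cast Nat.lt_succ_self j) h
        simp only [hL]
        rw [if_pos h, if_pos hj]
        exact hlamVmono j h
      · have : L (j + 1) = 0 := by rw [hL]; simp only []; rw [if_neg h]
        rw [this]
        exact hL0 j
    have hDD0 : ∀ i j, 0 ≤ DD i j := by
      intro i j
      simp only [hDD]
      split_ifs with h
      · exact sq_nonneg _
      · exact le_refl 0
    have hD0 : ∀ j, 0 ≤ D j := fun j => Finset.sum_nonneg fun i _ => hDD0 i j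
    have hD1 : ∀ j, D j ≤ 1 := by
      intro j
      by_cases h : (j : ℕ∞) < m
      · have h2 : D j = ∑ i : Fin n, c i ⟨j, h⟩ ^ 2 := by
          rw [hD]
          refine Finset.sum_congr rfl fun i _ => ?_
          simp only [hDD, hc]
          rw [dif_pos h]
        rw [h2]
        exact hFC ⟨j, h⟩
      · have h2 : D j = 0 := by
          rw [hD]
          refine Finset.sum_eq_zero fun i _ => ?_
          simp only [hDD]
          rw [dif_neg h]
        rw [h2]
        exact zero_le_one
    have hmaj := major L D n hL0 hLa hD0 hD1 hDsum hLDsum.summable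
    rw [hLDsum.tsum_eq] at hmaj
    have hLsum : ∑ j ∈ Finset.range n, L j = ∑ j ∈ Finset.range n, lamV j := by
      refine Finset.sum_congr rfl fun j hj => ?_
      simp only [hL]
      rw [if_pos (hcast (Finset.mem_range.1 hj))]
    rw [hLsum] at hmaj
    have hts : tsum a = ∑ i : Fin n, a i := tsum_fintype a
    rw [heq, hts]
    linarith
  · -- Part 2
    intro p hp
    set W : Submodule ℝ H := Submodule.span ℝ (u '' Set.Iio n) with hW
    haveI : FiniteDimensional ℝ W := FiniteDimensional.span_of_finite ℝ ((Set.finite_Iio n).image u)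
    have hWc : IsClosed (W : Set H) := W.closed_of_finiteDimensional
    set w : Fin n → H := fun i => u i with hwdef
    have hw_on : Orthonormal ℝ w := by
      refine orthonormal_iff_ite.2 fun i j => ?_
      simp only [hwdef]
      rw [huon i j (hcast i.isLt) (hcast j.isLt)]
      by_cases h : i = j
      · subst h; rw [if_pos rfl, if_pos rfl]
      · rw [if_neg (fun hh => h (Fin.ext hh)), if_neg h]
    have hw_mem : ∀ i : Fin n, w i ∈ W :=
      fun i => Submodule.subset_span ⟨(i : ℕ), i.isLt, rfl⟩
    have hrange : Set.range w = u '' Set.Iio n := by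
      ext y; constructor
      · rintro ⟨i, rfl⟩; exact ⟨i, i.isLt, rfl⟩
      · rintro ⟨j, hj, rfl⟩; exact ⟨⟨j, hj⟩, rfl⟩
    have hw_dense : (W : Set H)
        ⊆ closure ((Submodule.span ℝ (Set.range w) : Submodule ℝ H) : Set H) := by
      rw [hrange]; exact subset_closure
    obtain ⟨hsummable, heq⟩ := core μ k ι hι e lam he hdense heig hsum W hWc w hw_on hw_mem
      hw_dense p hp
    have hterm : ∀ i : Fin n, ⟪ι (w i), ι (w i)⟫_ℝ = lamV i := fun i => by
      simp only [hwdef]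
      rw [hlamV _ _ (hcast i.isLt) (hcast i.isLt), if_pos rfl]
    have hsumfin : ∑' (i : Fin n), ⟪ι (w i), ι (w i)⟫_ℝ = ∑ j ∈ Finset.range n, lamV j := by
      rw [tsum_fintype, Finset.sum_congr rfl fun i _ => hterm i,
        ← Finset.sum_range fun j => lamV j]
    rw [heq, hsumfin]
  · -- Part 3
    intro p hp
    set w : {j : ℕ // (j : ℕ∞) < m} → H := fun j => u j with hwdef
    have hw_on : Orthonormal ℝ w := by
      refine orthonormal_iff_ite.2 fun i j => ?_
      simp only [hwdef]
      rw [huon i j i.2 j.2]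
      by_cases h : i = j
      · subst h; rw [if_pos rfl, if_pos rfl]
      · rw [if_neg (fun hh => h (Subtype.ext hh)), if_neg h]
    have hw_mem : ∀ i, w i ∈ V := fun i => humem i i.2
    have hrange : Set.range w = u '' {j : ℕ | (j : ℕ∞) < m} := by
      ext y; constructor
      · rintro ⟨i, rfl⟩; exact ⟨i, i.2, rfl⟩
      · rintro ⟨j, hj, rfl⟩; exact ⟨⟨j, hj⟩, rfl⟩
    have hw_dense : (V : Set H)
        ⊆ closure ((Submodule.span ℝ (Set.range w) : Submodule ℝ H) : Set H) := by
      rw [hrange, ← Submodule.topologicalClosure_coe, huspan]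
    obtain ⟨hsummable, heq⟩ := core μ k ι hι e lam he hdense heig hsum V hVc w hw_on hw_mem
      hw_dense p hp
    rw [heq]
    congr 1
    refine tsum_congr fun i => ?_
    simp only [hwdef]
    rw [hlamV _ _ i.2 i.2, if_pos rfl]
end

section
/- Assume Σ_j λ_j < ∞ and μ(Ω) < ∞. Let V ⊆ H be a closed subspace of dimension m (possibly infinite) admitting an H-orthonormal basis (u_j)_{1≤j≤m} of V with ⟨ι u_i, ι u_j⟩_{L²(μ)} = λ_{j,V} δ_{ij} and λ_{1,V} ≥ λ_{2,V} ≥ … > 0. If sup over x ∈ Ω of P_V(x) is at most ε, then for every 1 ≤ j ≤ m: 0 ≤ λ_j − λ_{j,V} ≤ μ(Ω)·ε². -/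
open MeasureTheory
open scoped InnerProductSpace

theorem existsKer' {n : ℕ} (L : (Fin (n+1) → ℝ) →ₗ[ℝ] (Fin n → ℝ)) : ∃ c, c ≠ 0 ∧ L c = 0 := by
  by_contra h
  push_neg at h
  have hinj : Function.Injective L := by
    rw [← LinearMap.ker_eq_bot, eq_bot_iff]
    intro c hc
    by_contra hc0
    exact (h c (by simpa using hc0)) (LinearMap.mem_ker.mp hc)
  have := LinearMap.finrank_le_finrank_of_injective hinj
  simp [Module.finrank_pi] at this

theorem iotaNormSq' {H : Type*} [NormedAddCommGroup H] [InnerProductSpace ℝ H] [CompleteSpace H]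
    {L2 : Type*} [NormedAddCommGroup L2] [InnerProductSpace ℝ L2] [CompleteSpace L2]
    (ι : H →L[ℝ] L2) (e : ℕ → H) (lam : ℕ → ℝ)
    (hb : HilbertBasis ℕ ℝ H) (hbe : ⇑hb = e)
    (heig : ∀ i j, ⟪ι (e i), ι (e j)⟫_ℝ = if i = j then lam j else 0)
    (g : H) :
    HasSum (fun l => ⟪e l, g⟫_ℝ^2 * lam l) ⟪ι g, ι g⟫_ℝ := by
  have hrepr : HasSum (fun l => ⟪e l, g⟫_ℝ • e l) g := by
    have h := hb.hasSum_repr g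
    simp only [hb.repr_apply_apply] at h
    simp only [← hbe]
    exact h
  have h1 : HasSum (fun l => ⟪e l, g⟫_ℝ • ι (e l)) (ι g) := by
    simpa using ι.hasSum hrepr
  have key : ∀ i, ⟪ι (e i), ι g⟫_ℝ = ⟪e i, g⟫_ℝ * lam i := by
    intro i
    have h2 : HasSum (fun l => ⟪e l, g⟫_ℝ * ⟪ι (e i), ι (e l)⟫_ℝ) ⟪ι (e i), ι g⟫_ℝ := by
      simpa [real_inner_smul_right] using (innerSL ℝ (ι (e i))).hasSum h1
    have h3 : HasSum (fun l => if l = i then ⟪e i, g⟫_ℝ * lam i else 0) ⟪ι (e i), ι g⟫_ℝ := by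
      refine h2.congr_fun fun l => ?_
      rcases eq_or_ne l i with rfl | hne
      · rw [heig]; simp
      · simp [heig, hne.symm, hne]
    exact ((hasSum_ite_eq i _).unique h3).symm
  have h4 : HasSum (fun l => ⟪e l, g⟫_ℝ * ⟪ι g, ι (e l)⟫_ℝ) ⟪ι g, ι g⟫_ℝ := by
    simpa [real_inner_smul_right] using (innerSL ℝ (ι g)).hasSum h1
  refine h4.congr_fun fun l => ?_
  rw [show ⟪ι g, ι (e l)⟫_ℝ = ⟪ι (e l), ι g⟫_ℝ from real_inner_comm _ _, key l]
  ring

theorem parsevalH' {H : Type*} [NormedAddCommGroup H] [InnerProductSpace ℝ H] [CompleteSpace H]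
    (e : ℕ → H) (hb : HilbertBasis ℕ ℝ H) (hbe : ⇑hb = e) (g : H) :
    HasSum (fun l => ⟪e l, g⟫_ℝ^2) ⟪g, g⟫_ℝ := by
  have h := hb.hasSum_inner_mul_inner g g
  simp only [← hbe]
  refine h.congr_fun fun l => ?_
  rw [real_inner_comm g]
  ring

theorem part1' {H : Type*} [NormedAddCommGroup H] [InnerProductSpace ℝ H] [CompleteSpace H]
    {L2 : Type*} [NormedAddCommGroup L2] [InnerProductSpace ℝ L2] [CompleteSpace L2]
    (ι : H →L[ℝ] L2) (e : ℕ → H) (lam : ℕ → ℝ)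
    (hb : HilbertBasis ℕ ℝ H) (hbe : ⇑hb = e)
    (heig : ∀ i j, ⟪ι (e i), ι (e j)⟫_ℝ = if i = j then lam j else 0)
    (hlam_anti : Antitone lam)
    (j : ℕ) (w : Fin (j+1) → H) (lw : Fin (j+1) → ℝ)
    (hwon : ∀ i i', ⟪w i, w i'⟫_ℝ = if i = i' then 1 else 0)
    (hlw : ∀ i i', ⟪ι (w i), ι (w i')⟫_ℝ = if i = i' then lw i' else 0)
    (hlwj : ∀ i, lw (Fin.last j) ≤ lw i) :
    lw (Fin.last j) ≤ lam j := by
  obtain ⟨c, hc0, hMc⟩ := existsKer' ((Matrix.of fun (l : Fin j) (i : Fin (j+1)) => ⟪e l, w i⟫_ℝ).mulVecLin)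
  set g : H := ∑ i, c i • w i with hg
  have hgg : ⟪g, g⟫_ℝ = ∑ i, (c i)^2 := by
    simp only [hg, sum_inner]
    simp [hg, sum_inner, inner_sum, real_inner_smul_left, real_inner_smul_right, hwon,
      mul_ite, Finset.sum_ite_eq', sq]
  have hiota : ⟪ι g, ι g⟫_ℝ = ∑ i, (c i)^2 * lw i := by
    simp only [hg, map_sum, sum_inner]
    simp [hg, map_sum, _root_.map_smul, sum_inner, inner_sum, real_inner_smul_left,
      real_inner_smul_right, hlw, mul_ite, Finset.sum_ite_eq', sq]
    exact Finset.sum_congr rfl fun i _ => by ring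
  have ha0 : ∀ l : ℕ, l < j → ⟪e l, g⟫_ℝ = 0 := by
    intro l hl
    have := congrFun hMc ⟨l, hl⟩
    simpa [hg, inner_sum, real_inner_smul_right, Matrix.mulVecLin, Matrix.mulVec,
      dotProduct, mul_comm] using this
  have hS := iotaNormSq' ι e lam hb hbe heig g
  have hP : HasSum (fun l => ⟪e l, g⟫_ℝ^2) ⟪g, g⟫_ℝ := parsevalH' e hb hbe g
  have hub : ⟪ι g, ι g⟫_ℝ ≤ lam j * ⟪g, g⟫_ℝ := by
    refine hasSum_le (fun l => ?_) hS (hP.mul_left (lam j))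
    rcases lt_or_ge l j with hl | hl
    · simp [ha0 l hl]
    · have := hlam_anti hl
      nlinarith [sq_nonneg (⟪e l, g⟫_ℝ)]
  have hlb : lw (Fin.last j) * ⟪g, g⟫_ℝ ≤ ⟪ι g, ι g⟫_ℝ := by
    rw [hiota, hgg, Finset.mul_sum]
    refine Finset.sum_le_sum fun i _ => ?_
    have := hlwj i
    nlinarith [sq_nonneg (c i)]
  have hpos : 0 < ⟪g, g⟫_ℝ := by
    rw [hgg]
    rcases Function.ne_iff.mp hc0 with ⟨i, hi⟩
    exact Finset.sum_pos' (fun i _ => sq_nonneg _)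
      ⟨i, Finset.mem_univ i, lt_of_le_of_ne (sq_nonneg _) (Ne.symm (pow_ne_zero 2 hi))⟩
  have := hlb.trans hub
  exact le_of_mul_le_mul_right (by linarith [this]) hpos

theorem parsevalV' {H : Type*} [NormedAddCommGroup H] [InnerProductSpace ℝ H] [CompleteSpace H]
    (V : Submodule ℝ H) (hVc : IsClosed (V : Set H))
    (S : Set ℕ) (u : ℕ → H)
    (humem : ∀ j ∈ S, u j ∈ V)
    (huon : ∀ i ∈ S, ∀ j ∈ S, ⟪u i, u j⟫_ℝ = if i = j then 1 else 0)
    (huspan : (Submodule.span ℝ (u '' S)).topologicalClosure = V)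
    (y : H) (hy : y ∈ V) :
    HasSum (fun i : S => ⟪u ↑i, y⟫_ℝ ^ 2) ⟪y, y⟫_ℝ := by
  haveI : CompleteSpace V := hVc.completeSpace_coe
  set v : S → V := fun i => ⟨u i, humem i i.2⟩ with hv
  have hvon : Orthonormal ℝ v := by
    rw [orthonormal_iff_ite]
    intro i j
    have := huon i i.2 j j.2
    rcases eq_or_ne i j with rfl | hne
    · simpa [Submodule.coe_inner, v] using this
    · have hne' : (i : ℕ) ≠ (j : ℕ) := fun h => hne (Subtype.ext h)
      simp only [Submodule.coe_inner]
      simpa [v, hne, hne'] using this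
  have himg : (Subtype.val '' Set.range v) = u '' S := by
    ext x
    constructor
    · rintro ⟨w, ⟨i, rfl⟩, rfl⟩; exact ⟨i, i.2, rfl⟩
    · rintro ⟨i, hi, rfl⟩; exact ⟨v ⟨i, hi⟩, ⟨⟨i, hi⟩, rfl⟩, rfl⟩
  have hsp : ⊤ ≤ (Submodule.span ℝ (Set.range v)).topologicalClosure := by
    intro w _
    have hce : Topology.IsClosedEmbedding (Subtype.val : V → H) :=
      Topology.IsClosedEmbedding.subtypeVal hVc
    have hwH : (w : H) ∈ closure ((Submodule.span ℝ (u '' S) : Set H)) := by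
      rw [← Submodule.topologicalClosure_coe, huspan]
      exact w.2
    have hmap : Submodule.span ℝ (u '' S) =
        Submodule.map V.subtype (Submodule.span ℝ (Set.range v)) := by
      rw [← Submodule.span_image]
      congr 1
      rw [← himg]
      rfl
    have hset : ((Submodule.span ℝ (u '' S) : Set H)) =
        Subtype.val '' ((Submodule.span ℝ (Set.range v) : Set V)) := by
      rw [hmap, Submodule.map_coe]
      rfl
    rw [hset, hce.closure_image_eq] at hwH
    obtain ⟨w', hw', hww⟩ := hwH
    have hww' : w' = w := Subtype.ext hww
    rw [← SetLike.mem_coe, Submodule.topologicalClosure_coe]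
    exact hww' ▸ hw'
  set bV : HilbertBasis S ℝ V := HilbertBasis.mk hvon hsp with hbV
  have hbv : ⇑bV = v := HilbertBasis.coe_mk hvon hsp
  set yv : V := ⟨y, hy⟩ with hyv
  have h := bV.hasSum_inner_mul_inner yv yv
  have h' : HasSum (fun i : S => ⟪u ↑i, y⟫_ℝ ^ 2) ⟪yv, yv⟫_ℝ := by
    refine h.congr_fun fun i => ?_
    rw [congrFun hbv i]
    show ⟪u ↑i, y⟫_ℝ ^ 2 = inner (𝕜 := ℝ) y (u ↑i) * inner (𝕜 := ℝ) (u ↑i) y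
    rw [sq, real_inner_comm y (u ↑i)]
  have : (inner ℝ yv yv : ℝ) = (inner ℝ y y : ℝ) := rfl
  exact this ▸ h'

theorem lintSum' {Ω : Type*} [MeasurableSpace Ω] (μ : Measure Ω) {T : Type*} [Countable T]
    (φ : T → Lp ℝ 2 μ) (G : T → Ω → ℝ) (F : Ω → ℝ)
    (hae : ∀ i, (φ i : Ω → ℝ) =ᵐ[μ] G i)
    (hPar : ∀ x, HasSum (fun i => (G i x)^2) (F x)) :
    ∫⁻ x, ENNReal.ofReal (F x) ∂μ = ∑' i, ENNReal.ofReal ⟪φ i, φ i⟫_ℝ := by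
  have step1 : ∀ i, ENNReal.ofReal ⟪φ i, φ i⟫_ℝ = ∫⁻ x, ENNReal.ofReal (((φ i : Ω → ℝ) x)^2) ∂μ := by
    intro i
    have hint : Integrable (fun x => ((φ i : Ω → ℝ) x)^2) μ := by
      simpa [sq] using L2.integrable_inner (𝕜 := ℝ) (φ i) (φ i)
    have hinner : ⟪φ i, φ i⟫_ℝ = ∫ x, ((φ i : Ω → ℝ) x)^2 ∂μ := by
      rw [L2.inner_def]
      congr 1
      ext x
      simp [sq, RCLike.inner_apply]
    rw [hinner]
    exact ofReal_integral_eq_lintegral_ofReal hint (Filter.Eventually.of_forall fun x => sq_nonneg _)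
  have hae' : ∀ᵐ x ∂μ, ∀ i, (φ i : Ω → ℝ) x = G i x := (ae_all_iff).mpr hae
  have step2 : ∫⁻ x, ENNReal.ofReal (F x) ∂μ
      = ∫⁻ x, ∑' i, ENNReal.ofReal (((φ i : Ω → ℝ) x)^2) ∂μ := by
    refine lintegral_congr_ae ?_
    filter_upwards [hae'] with x hx
    have h1 : HasSum (fun i => ((φ i : Ω → ℝ) x)^2) (F x) :=
      (hPar x).congr_fun fun i => by rw [hx i]
    rw [← h1.tsum_eq, ENNReal.ofReal_tsum_of_nonneg (fun i => sq_nonneg _) h1.summable]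
  rw [step2, lintegral_tsum fun i => ?_]
  · exact tsum_congr fun i => (step1 i).symm
  · exact ENNReal.measurable_ofReal.comp_aemeasurable
      (((Lp.aestronglyMeasurable (φ i)).aemeasurable).pow aemeasurable_const)

/-- Assume `Σ_j λ_j < ∞` and `μ(Ω) < ∞`. Let `V ⊆ H` be a closed subspace
of dimension `m` (possibly infinite) with an `H`-orthonormal basis `(u_j)_{j<m}` of `V`
satisfying `⟪ι u_i, ι u_j⟫_{L²} = λ_{j,V} δ_{ij}`, `λ_{0,V} ≥ λ_{1,V} ≥ … > 0`. If the Power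
Function of `V` is bounded by `ε` on `Ω`, then `0 ≤ λ_j − λ_{j,V} ≤ μ(Ω) ε²` for all
`j < m`. -/
theorem stmt16 {H : Type*} [NormedAddCommGroup H] [InnerProductSpace ℝ H] [CompleteSpace H]
    {Ω : Type*} [MeasurableSpace Ω] (μ : Measure Ω) [IsFiniteMeasure μ] (k : Ω → H)
    (ι : H →L[ℝ] Lp ℝ 2 μ)
    (hι : ∀ f : H, (ι f : Ω → ℝ) =ᵐ[μ] fun x => ⟪f, k x⟫_ℝ)
    (hinj : Function.Injective ι)
    (e : ℕ → H) (lam : ℕ → ℝ)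
    (he : Orthonormal ℝ e)
    (hdense : (Submodule.span ℝ (Set.range e)).topologicalClosure = ⊤)
    (hpos : ∀ j, 0 < lam j) (hmono : ∀ j, lam (j + 1) ≤ lam j)
    (heig : ∀ i j, ⟪ι (e i), ι (e j)⟫_ℝ = if i = j then lam j else 0)
    (hsum : Summable lam)
    (V : Submodule ℝ H) (hVc : IsClosed (V : Set H))
    (m : ℕ∞) (u : ℕ → H) (lamV : ℕ → ℝ)
    (humem : ∀ j : ℕ, (j : ℕ∞) < m → u j ∈ V)
    (huon : ∀ i j : ℕ, (i : ℕ∞) < m → (j : ℕ∞) < m →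
      ⟪u i, u j⟫_ℝ = if i = j then 1 else 0)
    (huspan : (Submodule.span ℝ (u '' {j : ℕ | (j : ℕ∞) < m})).topologicalClosure = V)
    (hlamV : ∀ i j : ℕ, (i : ℕ∞) < m → (j : ℕ∞) < m →
      ⟪ι (u i), ι (u j)⟫_ℝ = if i = j then lamV j else 0)
    (hlamVpos : ∀ j : ℕ, (j : ℕ∞) < m → 0 < lamV j)
    (hlamVmono : ∀ j : ℕ, ((j + 1 : ℕ) : ℕ∞) < m → lamV (j + 1) ≤ lamV j)
    (p : H →ₗ[ℝ] H) (hp : ∀ f : H, p f ∈ V ∧ f - p f ∈ Vᗮ)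
    (ε : ℝ) (hε : ∀ x : Ω, ‖k x - p (k x)‖ ≤ ε) :
    ∀ j : ℕ, (j : ℕ∞) < m →
      0 ≤ lam j - lamV j ∧ lam j - lamV j ≤ (μ Set.univ).toReal * ε ^ 2 := by
  -- Ω is nonempty, hence ε ≥ 0
  rcases isEmpty_or_nonempty Ω with hemp | hne
  · exfalso
    have hμ0 : μ = 0 := Measure.eq_zero_of_isEmpty μ
    have : ⟪ι (e 0), ι (e 0)⟫_ℝ = 0 := by
      rw [L2.inner_def]
      rw [show (fun a : Ω => ⟪((ι (e 0) : Ω → ℝ)) a, ((ι (e 0) : Ω → ℝ)) a⟫_ℝ) = fun _ => (0:ℝ)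
        from funext fun a => isEmptyElim a]
      simp
    rw [heig 0 0] at this
    simp at this
    exact absurd this (ne_of_gt (hpos 0))
  have hε0 : 0 ≤ ε := le_trans (norm_nonneg _) (hε (Classical.arbitrary Ω))
  -- Hilbert basis of H
  set hb : HilbertBasis ℕ ℝ H := HilbertBasis.mk he (le_of_eq hdense.symm) with hhb
  have hbe : ⇑hb = e := HilbertBasis.coe_mk he (le_of_eq hdense.symm)
  have hanti : Antitone lam := antitone_nat_of_succ_le hmono
  -- antitonicity of lamV
  have hlamVanti : ∀ b a : ℕ, a ≤ b → (b : ℕ∞) < m → lamV b ≤ lamV a := by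
    intro b
    induction b with
    | zero => intro a ha _; simp [Nat.le_zero.mp ha]
    | succ n ih =>
      intro a ha hb'
      rcases Nat.le_succ_iff.mp ha with h | rfl
      · exact le_trans (hlamVmono n hb')
          (ih a h ((Nat.cast_le.mpr (Nat.le_succ n)).trans_lt hb'))
      · exact le_rfl
  -- Part 1 : lamV i ≤ lam i for all i < m
  have hle : ∀ i : ℕ, (i : ℕ∞) < m → lamV i ≤ lam i := by
    intro j hj
    have hmem' : ∀ i : Fin (j+1), ((i : ℕ) : ℕ∞) < m := by
      intro i
      exact lt_of_le_of_lt (Nat.cast_le.mpr (Nat.lt_succ_iff.mp i.2)) hj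
    have key := part1' ι e lam hb hbe heig hanti j (fun i => u i) (fun i => lamV i)
      (fun i i' => ?_) (fun i i' => ?_) (fun i => ?_)
    · simpa using key
    · rw [huon i i' (hmem' i) (hmem' i')]
      rcases eq_or_ne i i' with rfl | hne'
      · simp
      · simp [Fin.val_eq_val, hne']
    · rw [hlamV i i' (hmem' i) (hmem' i')]
      rcases eq_or_ne i i' with rfl | hne'
      · simp
      · simp [Fin.val_eq_val, hne']
    · have : (i : ℕ) ≤ j := Nat.lt_succ_iff.mp i.2
      simpa using hlamVanti j i this hj
  -- Part 2
  set S : Set ℕ := {i : ℕ | (i : ℕ∞) < m} with hSdef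
  have hSmem : ∀ i : S, ((i : ℕ) : ℕ∞) < m := fun i => i.2
  have hParH : ∀ x : Ω, HasSum (fun l : ℕ => ⟪e l, k x⟫_ℝ ^ 2) ⟪k x, k x⟫_ℝ :=
    fun x => parsevalH' e hb hbe (k x)
  have hup : ∀ i : ℕ, (i : ℕ∞) < m → ∀ y : H, ⟪u i, p y⟫_ℝ = ⟪u i, y⟫_ℝ := by
    intro i hi y
    have h0 : ⟪u i, y - p y⟫_ℝ = 0 :=
      (Submodule.mem_orthogonal V (y - p y)).mp (hp y).2 (u i) (humem i hi)
    rw [inner_sub_right] at h0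
    linarith
  have hParV : ∀ x : Ω, HasSum (fun i : S => ⟪u ↑i, k x⟫_ℝ ^ 2) ⟪p (k x), p (k x)⟫_ℝ := by
    intro x
    have h := parsevalV' V hVc S u (fun j hj => humem j hj) (fun i hi j hj => huon i j hi hj)
      huspan (p (k x)) (hp (k x)).1
    refine h.congr_fun fun i => ?_
    rw [hup ↑i (hSmem i) (k x)]
  have hA : ∫⁻ x, ENNReal.ofReal ⟪k x, k x⟫_ℝ ∂μ = ∑' i : ℕ, ENNReal.ofReal (lam i) := by
    rw [lintSum' μ (fun i : ℕ => ι (e i)) (fun i x => ⟪e i, k x⟫_ℝ) _ (fun i => hι (e i)) hParH]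
    exact tsum_congr fun i => by rw [heig i i]; simp
  have hB : ∫⁻ x, ENNReal.ofReal ⟪p (k x), p (k x)⟫_ℝ ∂μ
      = ∑' i : S, ENNReal.ofReal (lamV ↑i) := by
    rw [lintSum' μ (fun i : S => ι (u ↑i)) (fun i x => ⟪u ↑i, k x⟫_ℝ) _
      (fun i => hι (u ↑i)) hParV]
    exact tsum_congr fun i => by rw [hlamV ↑i ↑i (hSmem i) (hSmem i)]; simp
  have hpt : ∀ x : Ω, ENNReal.ofReal ⟪k x, k x⟫_ℝ
      ≤ ENNReal.ofReal ⟪p (k x), p (k x)⟫_ℝ + ENNReal.ofReal (ε ^ 2) := by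
    intro x
    have horth : ⟪p (k x), k x - p (k x)⟫_ℝ = 0 :=
      (Submodule.mem_orthogonal V (k x - p (k x))).mp (hp (k x)).2 (p (k x)) (hp (k x)).1
    have hab : p (k x) + (k x - p (k x)) = k x := by abel
    have hpyth : ⟪k x, k x⟫_ℝ
        = ⟪p (k x), p (k x)⟫_ℝ + ⟪k x - p (k x), k x - p (k x)⟫_ℝ := by
      rw [← hab, real_inner_add_add_self, horth]
      ring_nf
      rw [hab]
    have hres : ⟪k x - p (k x), k x - p (k x)⟫_ℝ ≤ ε ^ 2 := by
      rw [real_inner_self_eq_norm_sq]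
      exact pow_le_pow_left₀ (norm_nonneg _) (hε x) 2
    rw [hpyth]
    exact le_trans ENNReal.ofReal_add_le
      (add_le_add_right (ENNReal.ofReal_le_ofReal hres) _)
  have hsubS : Summable (fun i : S => lam ↑i) := hsum.subtype S
  have hsumS : Summable (fun i : S => lamV ↑i) :=
    Summable.of_nonneg_of_le (fun i => (hlamVpos ↑i (hSmem i)).le)
      (fun i => hle ↑i (hSmem i)) hsubS
  have hAB : ∫⁻ x, ENNReal.ofReal ⟪k x, k x⟫_ℝ ∂μ
      ≤ (∑' i : S, ENNReal.ofReal (lamV ↑i)) + ENNReal.ofReal (ε ^ 2) * μ Set.univ := by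
    calc ∫⁻ x, ENNReal.ofReal ⟪k x, k x⟫_ℝ ∂μ
        ≤ ∫⁻ x, (ENNReal.ofReal ⟪p (k x), p (k x)⟫_ℝ + ENNReal.ofReal (ε ^ 2)) ∂μ :=
          lintegral_mono hpt
      _ = (∫⁻ x, ENNReal.ofReal ⟪p (k x), p (k x)⟫_ℝ ∂μ)
            + ∫⁻ _, ENNReal.ofReal (ε ^ 2) ∂μ := lintegral_add_right _ measurable_const
      _ = (∑' i : S, ENNReal.ofReal (lamV ↑i)) + ENNReal.ofReal (ε ^ 2) * μ Set.univ := by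
          rw [hB, lintegral_const]
  have hTA : (∑' i : ℕ, ENNReal.ofReal (lam i)) = ENNReal.ofReal (∑' i, lam i) :=
    (ENNReal.ofReal_tsum_of_nonneg (fun i => (hpos i).le) hsum).symm
  have hTB : (∑' i : S, ENNReal.ofReal (lamV ↑i)) = ENNReal.ofReal (∑' i : S, lamV ↑i) :=
    (ENNReal.ofReal_tsum_of_nonneg (fun i : S => (hlamVpos ↑i (hSmem i)).le) hsumS).symm
  have hkey : ENNReal.ofReal (∑' i, lam i)
      ≤ ENNReal.ofReal (∑' i : S, lamV ↑i) + ENNReal.ofReal (ε ^ 2) * μ Set.univ := by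
    rw [← hTA, ← hTB, ← hA]
    rw [hTB] at hAB
    rwa [hTB]
  have hμfin : ENNReal.ofReal (ε ^ 2) * μ Set.univ ≠ ⊤ :=
    ENNReal.mul_ne_top ENNReal.ofReal_ne_top (measure_ne_top μ _)
  have hfin : ENNReal.ofReal (∑' i : S, lamV ↑i) + ENNReal.ofReal (ε ^ 2) * μ Set.univ ≠ ⊤ :=
    ENNReal.add_ne_top.mpr ⟨ENNReal.ofReal_ne_top, hμfin⟩
  have hreal : (∑' i, lam i) ≤ (∑' i : S, lamV ↑i) + (μ Set.univ).toReal * ε ^ 2 := by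
    have h := ENNReal.toReal_mono hfin hkey
    rw [ENNReal.toReal_ofReal (tsum_nonneg fun i => (hpos i).le)] at h
    rw [ENNReal.toReal_add ENNReal.ofReal_ne_top hμfin,
      ENNReal.toReal_ofReal (tsum_nonneg fun i : S => (hlamVpos ↑i (hSmem i)).le),
      ENNReal.toReal_mul, ENNReal.toReal_ofReal (sq_nonneg ε)] at h
    linarith
  intro j hj
  refine ⟨sub_nonneg.mpr (hle j hj), ?_⟩
  have hsplit : (∑' i : ℕ, lam i) = (∑' i : S, lam ↑i) + ∑' i : ↑Sᶜ, lam ↑i :=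
    (Summable.tsum_add_tsum_compl hsubS (hsum.subtype Sᶜ)).symm
  have hsub : Summable (fun i : S => lam ↑i - lamV ↑i) := hsubS.sub hsumS
  have hj' : lam j - lamV j ≤ ∑' i : S, (lam ↑i - lamV ↑i) := by
    have h := Summable.le_tsum hsub ⟨j, hj⟩ (fun i _ => sub_nonneg.mpr (hle ↑i (hSmem i)))
    simpa using h
  have hdiff : (∑' i : S, (lam ↑i - lamV ↑i)) = (∑' i : S, lam ↑i) - ∑' i : S, lamV ↑i :=
    Summable.tsum_sub hsubS hsumS
  have hcnn : 0 ≤ ∑' i : ↑Sᶜ, lam ↑i := tsum_nonneg fun i => (hpos ↑i).le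
  linarith
end
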